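/- arXiv:1502.03965 — 2 statements merged into one kernel-verified Lean document; each statement's English description precedes it below -/
import Mathlib

section
/- Fix an integer d ≥ 3 and positive integers n, k with n = dk, and let 𝒻 be a family of d-element subsets of [n]. Let G' be the graph constructed from ([n], 𝒻, k) as follows: the matrix vertices are M = {v_{i,j} : i ∈ [n], j ∈ [k]}, and for each j ∈ [k] the set {v_{i,j} : i ∈ [n]} induces a clique; for each i ∈ [n] there is a dummy clique D_i of d − 1 vertices, each adjacent to all of {v_{i,j} : j ∈ [k]}; and for each d-element subset X of [n] with X ∉ 𝒻 and each j ∈ [k] there is an enforcer vertex f_{j,X} whose neighborhood is exactly {v_{i,j} : i ∈ X}. Let k' = k(n − d). If there exist k sets in 𝒻 that partition [n], then there exists a set S' ⊆ V(G') of size at most k' such that G' − S' contains no K_{d+1} minor, contains no P_{4d} minor, and has treewidth at most d − 1. -/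
/-- A tree decomposition of a graph `G`: a tree `tree` together with bags `bag t ⊆ V(G)`
such that every vertex appears in some bag, every edge has both endpoints in some bag,
and for every vertex the set of bags containing it induces a (connected) subtree. -/
structure TreeDecomp {V : Type*} (G : SimpleGraph V) where
  ι : Type
  tree : SimpleGraph ι
  isTree : tree.IsTree
  bag : ι → Set V
  mem_bag : ∀ v : V, ∃ t : ι, v ∈ bag t
  edge_bag : ∀ ⦃u v : V⦄, G.Adj u v → ∃ t : ι, u ∈ bag t ∧ v ∈ bag t
  conn : ∀ v : V, (tree.induce {t : ι | v ∈ bag t}).Connected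

/-- The width of a tree decomposition: the maximum bag size minus one. -/
noncomputable def TreeDecomp.width {V : Type*} {G : SimpleGraph V} (D : TreeDecomp G) : ℕ :=
  sSup (Set.range fun t => Nat.card (D.bag t)) - 1

/-- The treewidth of `G`: the minimum width of a tree decomposition of `G`. -/
noncomputable def SimpleGraph.treewidth {V : Type*} (G : SimpleGraph V) : ℕ :=
  sInf {n : ℕ | ∃ D : TreeDecomp G, D.width = n}


/-- `H` is a minor of `G`: there is a family of nonempty, connected, pairwise disjoint
branch sets in `G`, one for each vertex of `H`, such that adjacent vertices of `H` have
branch sets joined by an edge of `G`. -/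
def SimpleGraph.HasMinor {V W : Type*} (G : SimpleGraph V) (H : SimpleGraph W) : Prop :=
  ∃ φ : W → Set V,
    (∀ w : W, (G.induce (φ w)).Connected) ∧
    (Pairwise fun w₁ w₂ => Disjoint (φ w₁) (φ w₂)) ∧
    (∀ ⦃w₁ w₂ : W⦄, H.Adj w₁ w₂ → ∃ u ∈ φ w₁, ∃ v ∈ φ w₂, G.Adj u v)


/-- Index type for the enforcer vertices: `d`-element subsets of `[n]` not in `𝒻`. -/
abbrev EnforcerIdx (n d : ℕ) (𝒻 : Finset (Finset (Fin n))) : Type :=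
  {X : Finset (Fin n) // X.card = d ∧ X ∉ 𝒻}

/-- The vertex type of the lower-bound construction: matrix vertices `v_{i,j}`,
dummy vertices (`d - 1` per row), and enforcer vertices `f_{j,X}`. -/
abbrev CVert (n k d : ℕ) (𝒻 : Finset (Finset (Fin n))) : Type :=
  (Fin n × Fin k) ⊕ (Fin n × Fin (d - 1)) ⊕ (EnforcerIdx n d 𝒻 × Fin k)

/-- The generating relation for the edges of the construction. -/
def CRel (n k d : ℕ) (𝒻 : Finset (Finset (Fin n))) :
    CVert n k d 𝒻 → CVert n k d 𝒻 → Prop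
  | Sum.inl (_, j), Sum.inl (_, j') => j = j'
  | Sum.inr (Sum.inl (i, _)), Sum.inr (Sum.inl (i', _)) => i = i'
  | Sum.inr (Sum.inl (i, _)), Sum.inl (i', _) => i = i'
  | Sum.inr (Sum.inr (X, j)), Sum.inl (i, j') => j = j' ∧ i ∈ X.1
  | _, _ => False

/-- The graph `G'` of the lower-bound construction: each column of the matrix is a clique;
each dummy clique `D_i` (of `d - 1` vertices) is complete to row `i`; each enforcer vertex
`f_{j,X}` is adjacent exactly to `{v_{i,j} : i ∈ X}`. -/
def CGraph (n k d : ℕ) (𝒻 : Finset (Finset (Fin n))) : SimpleGraph (CVert n k d 𝒻) :=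
  SimpleGraph.fromRel (CRel n k d 𝒻)

open SimpleGraph

section Generic
variable {ι : Type}

lemma induce_connected_of_star (T : SimpleGraph ι) (P : Set ι) (c : ι) (hc : c ∈ P)
    (h : ∀ t ∈ P, t = c ∨ T.Adj c t) : (T.induce P).Connected := by
  have key : ∀ x : P, (T.induce P).Reachable x ⟨c, hc⟩ := by
    rintro ⟨x, hx⟩
    rcases h x hx with rfl | hadj
    · exact Reachable.refl _
    · exact SimpleGraph.Adj.reachable (by simpa using hadj.symm)
  exact (connected_iff _).2 ⟨fun a b => (key a).trans (key b).symm, ⟨⟨c, hc⟩⟩⟩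

/-- parent-pointer graph -/
def parentGraph (f : ι → ι) : SimpleGraph ι where
  Adj u v := u ≠ v ∧ (f u = v ∨ f v = u)
  symm := by constructor; intro u v ⟨h1, h2⟩; exact ⟨h1.symm, h2.symm⟩
  loopless := by constructor; intro u ⟨h1, _⟩; exact h1 rfl

lemma parentGraph_isTree (f : ι → ι) (h : ι → ℕ) (r : ι) (hr : f r = r)
    (hd : ∀ u, u ≠ r → h (f u) < h u) : (parentGraph f).IsTree := by
  constructor
  · -- connected
    have key : ∀ m : ℕ, ∀ u : ι, h u ≤ m → (parentGraph f).Reachable u r := by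
      intro m
      induction' m with m IH <;> intro u hu
      · by_cases h0 : u = r
        · subst h0; exact Reachable.refl _
        · exact absurd (Nat.lt_of_lt_of_le (hd u h0) hu) (Nat.not_lt_zero _)
      · by_cases h0 : u = r
        · subst h0; exact Reachable.refl _
        · have hlt := hd u h0
          have hne : u ≠ f u := by intro he; rw [← he] at hlt; exact lt_irrefl _ hlt
          have hadj : (parentGraph f).Adj u (f u) := ⟨hne, Or.inl rfl⟩
          exact hadj.reachable.trans (IH _ (Nat.le_of_lt_succ (Nat.lt_of_lt_of_le hlt hu)))
    exact (connected_iff _).2 ⟨fun a b => (key (h a) a le_rfl).trans (key (h b) b le_rfl).symm, ⟨r⟩⟩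
  · -- acyclic
    intro v c hc
    classical
    obtain ⟨m, hmsup, hmax⟩ := (c.support.toFinset).exists_max_image h
      ⟨v, by simp⟩
    rw [List.mem_toFinset] at hmsup
    have hmax' : ∀ x ∈ c.support, h x ≤ h m := fun x hx => hmax x (List.mem_toFinset.2 hx)
    set c' := c.rotate m hmsup with hc'
    have hcyc : c'.IsCycle := hc.rotate hmsup
    have hsup : ∀ x ∈ c'.support, h x ≤ h m := by
      intro x hx
      rcases List.mem_cons.1 (c'.support_eq_cons ▸ hx) with rfl | hx'
      · exact le_refl _
      · have : x ∈ c.support.tail := (Walk.support_rotate c m hmsup).mem_iff.1 hx'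
        exact hmax' x (c.support_eq_cons ▸ List.mem_cons_of_mem _ this)
    have parent_of : ∀ x, (parentGraph f).Adj m x → x ∈ c'.support → f m = x := by
      intro x hadj hx
      rcases hadj.2 with h1 | h1
      · exact h1
      · by_cases hxr : x = r
        · exfalso; apply hadj.1; rw [hxr] at h1 ⊢; exact h1 ▸ hr
        · exact absurd (lt_of_lt_of_le (h1 ▸ hd x hxr) (hsup x hx)) (lt_irrefl _)
    cases hni : c' with
    | nil => exact hcyc.ne_nil (by rw [hni])
    | cons hadj p =>
      rename_i a
      rw [hni] at hcyc hsup
      have ha : f m = a := parent_of a hadj (by rw [hni]; simp)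
      obtain ⟨x, hadj2, q, hq⟩ := Walk.exists_eq_cons_of_ne (hadj.ne) p.reverse
      have hxsup : x ∈ p.support := by
        have : x ∈ p.reverse.support := hq ▸ (by simp)
        simpa [Walk.support_reverse] using this
      have hx : f m = x := parent_of x hadj2 (by rw [hni]; simp [hxsup])
      have hedge : s(m, x) ∈ p.edges := by
        have : s(m, x) ∈ p.reverse.edges := hq ▸ (by simp)
        simpa [Walk.edges_reverse] using this
      have hnodup := hcyc.edges_nodup
      simp only [Walk.edges_cons, List.nodup_cons] at hnodup
      have hax : a = x := ha.symm.trans hx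
      subst hax
      exact hnodup.1 hedge
end Generic


section Construction
variable {n k d : ℕ} {𝒻 : Finset (Finset (Fin n))}

def delSet (n k d : ℕ) (𝒻 : Finset (Finset (Fin n))) (σ : Fin k → Finset (Fin n)) :
    Set (CVert n k d 𝒻) :=
  Sum.inl '' {p : Fin n × Fin k | p.1 ∉ σ p.2}

variable (σ : Fin k → Finset (Fin n)) (jm : Fin n → Fin k)

lemma mem_compl_inl {i : Fin n} {j : Fin k} :
    (Sum.inl (i,j) : CVert n k d 𝒻) ∈ (delSet n k d 𝒻 σ)ᶜ ↔ i ∈ σ j := by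
  simp [delSet]

lemma mem_compl_inr {x} : (Sum.inr x : CVert n k d 𝒻) ∈ (delSet n k d 𝒻 σ)ᶜ := by
  simp [delSet]

def mLab : CVert n k d 𝒻 → Fin k
  | Sum.inl (_, j) => j
  | Sum.inr (Sum.inl (i, _)) => jm i
  | Sum.inr (Sum.inr (_, j)) => j

lemma crel_cases {u v : CVert n k d 𝒻} (h : CRel n k d 𝒻 u v) :
    (∃ i i' j, u = Sum.inl (i,j) ∧ v = Sum.inl (i',j)) ∨
    (∃ i a a', u = Sum.inr (Sum.inl (i,a)) ∧ v = Sum.inr (Sum.inl (i,a'))) ∨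
    (∃ i a j, u = Sum.inr (Sum.inl (i,a)) ∧ v = Sum.inl (i,j)) ∨
    (∃ X j i, i ∈ X.1 ∧ u = Sum.inr (Sum.inr (X,j)) ∧ v = Sum.inl (i,j)) := by
  rcases u with ⟨i,j⟩ | ⟨i,a⟩ | ⟨X,j⟩ <;> rcases v with ⟨i',j'⟩ | ⟨i',a'⟩ | ⟨X',j'⟩ <;>
      simp only [CRel] at h
  · exact Or.inl ⟨i, i', j', by simp [h]⟩
  · subst h; exact Or.inr (Or.inr (Or.inl ⟨i, a, j', rfl, rfl⟩))
  · subst h; exact Or.inr (Or.inl ⟨i, a, a', rfl, rfl⟩)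
  · obtain ⟨rfl, hi⟩ := h
    exact Or.inr (Or.inr (Or.inr ⟨X, j, i', hi, rfl, rfl⟩))

/-- Inversion lemma for adjacency in `CGraph`. -/
lemma cadj_cases {u v : CVert n k d 𝒻} (h : (CGraph n k d 𝒻).Adj u v) :
    (∃ i i' j, u = Sum.inl (i,j) ∧ v = Sum.inl (i',j)) ∨
    (∃ i a a', u = Sum.inr (Sum.inl (i,a)) ∧ v = Sum.inr (Sum.inl (i,a'))) ∨
    (∃ i a j, (u = Sum.inr (Sum.inl (i,a)) ∧ v = Sum.inl (i,j)) ∨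
              (v = Sum.inr (Sum.inl (i,a)) ∧ u = Sum.inl (i,j))) ∨
    (∃ X j i, i ∈ X.1 ∧ ((u = Sum.inr (Sum.inr (X,j)) ∧ v = Sum.inl (i,j)) ∨
              (v = Sum.inr (Sum.inr (X,j)) ∧ u = Sum.inl (i,j)))) := by
  rw [CGraph, SimpleGraph.fromRel_adj] at h
  obtain ⟨hne, h | h⟩ := h
  · rcases crel_cases h with ⟨i,i',j,h1,h2⟩ | ⟨i,a,a',h1,h2⟩ | ⟨i,a,j,h1,h2⟩ | ⟨X,j,i,hi,h1,h2⟩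
    · exact Or.inl ⟨i, i', j, h1, h2⟩
    · exact Or.inr (Or.inl ⟨i, a, a', h1, h2⟩)
    · exact Or.inr (Or.inr (Or.inl ⟨i, a, j, Or.inl ⟨h1, h2⟩⟩))
    · exact Or.inr (Or.inr (Or.inr ⟨X, j, i, hi, Or.inl ⟨h1, h2⟩⟩))
  · rcases crel_cases h with ⟨i,i',j,h1,h2⟩ | ⟨i,a,a',h1,h2⟩ | ⟨i,a,j,h1,h2⟩ | ⟨X,j,i,hi,h1,h2⟩
    · exact Or.inl ⟨i', i, j, h2, h1⟩
    · exact Or.inr (Or.inl ⟨i, a', a, h2, h1⟩)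
    · exact Or.inr (Or.inr (Or.inl ⟨i, a, j, Or.inr ⟨h1, h2⟩⟩))
    · exact Or.inr (Or.inr (Or.inr ⟨X, j, i, hi, Or.inr ⟨h1, h2⟩⟩))

lemma adj_lab (hcov : ∀ (i : Fin n) (j : Fin k), i ∈ σ j ↔ j = jm i)
    {u v : CVert n k d 𝒻} (hu : u ∈ (delSet n k d 𝒻 σ)ᶜ) (hv : v ∈ (delSet n k d 𝒻 σ)ᶜ)
    (h : (CGraph n k d 𝒻).Adj u v) : mLab jm u = mLab jm v := by
  rcases cadj_cases h with ⟨i,i',j,rfl,rfl⟩ | ⟨i,a,a',rfl,rfl⟩ |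
    ⟨i,a,j,⟨rfl,rfl⟩|⟨rfl,rfl⟩⟩ | ⟨X,j,i,hi,⟨rfl,rfl⟩|⟨rfl,rfl⟩⟩
  · rfl
  · rfl
  · have := (hcov i j).1 ((mem_compl_inl σ).1 hv)
    simp [mLab, ← this]
  · have := (hcov i j).1 ((mem_compl_inl σ).1 hu)
    simp [mLab, ← this]
  · rfl
  · rfl

end Construction

section Sub
variable {n k d : ℕ} {𝒻 : Finset (Finset (Fin n))}

abbrev Gp (σ : Fin k → Finset (Fin n)) : SimpleGraph ↥((delSet n k d 𝒻 σ)ᶜ) :=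
  (CGraph n k d 𝒻).induce ((delSet n k d 𝒻 σ)ᶜ)

variable (σ : Fin k → Finset (Fin n)) (jm : Fin n → Fin k)

lemma walk_lab (hcov : ∀ (i : Fin n) (j : Fin k), i ∈ σ j ↔ j = jm i)
    (B : Set ↥((delSet n k d 𝒻 σ)ᶜ)) :
    ∀ (x y : ↥B) (_ : ((Gp σ).induce B).Walk x y), mLab jm x.1.1 = mLab jm y.1.1 := by
  intro x y w
  induction w with
  | nil => rfl
  | @cons a b c h p ih =>
    exact (adj_lab σ jm hcov a.1.2 b.1.2 h).trans ih

lemma lab_const (hcov : ∀ (i : Fin n) (j : Fin k), i ∈ σ j ↔ j = jm i)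
    (B : Set ↥((delSet n k d 𝒻 σ)ᶜ)) (hconn : ((Gp σ).induce B).Connected)
    {x y : ↥((delSet n k d 𝒻 σ)ᶜ)} (hx : x ∈ B) (hy : y ∈ B) :
    mLab jm x.1 = mLab jm y.1 :=
  (hconn ⟨x, hx⟩ ⟨y, hy⟩).elim fun w => walk_lab σ jm hcov B _ _ w

lemma classify (B : Set ↥((delSet n k d 𝒻 σ)ᶜ)) (hconn : ((Gp σ).induce B).Connected)
    (hnm : ∀ x ∈ B, ∀ (i : Fin n) (j0 : Fin k), x.1 ≠ Sum.inl (i,j0)) :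
    (∃ e ∈ B, B = {e} ∧ ∃ X j0, e.1 = Sum.inr (Sum.inr (X,j0))) ∨
    (∃ i : Fin n, ∀ x ∈ B, ∃ a, x.1 = Sum.inr (Sum.inl (i,a))) := by
  obtain ⟨x⟩ := hconn.nonempty
  rcases hxv : x.1.1 with ⟨i,j⟩ | ⟨i,a⟩ | ⟨X,j⟩
  · exact absurd hxv (hnm x.1 x.2 i j)
  · -- dummy case
    refine Or.inr ⟨i, fun y hy => ?_⟩
    have aux : ∀ (u v : ↥B) (_ : ((Gp σ).induce B).Walk u v),
        (∃ a0, u.1.1 = Sum.inr (Sum.inl (i,a0))) → ∃ a0, v.1.1 = Sum.inr (Sum.inl (i,a0)) := by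
      intro u v w
      induction w with
      | nil => exact id
      | @cons a b c h p ih =>
        rintro ⟨a0, hu⟩
        refine ih ?_
        have hadj : (CGraph n k d 𝒻).Adj a.1.1 b.1.1 := h
        rcases cadj_cases hadj with
          ⟨i1,i2,j1,h1,h2⟩ | ⟨i1,a1,a2,h1,h2⟩ |
          ⟨i1,a1,j1,⟨h1,h2⟩|⟨h1,h2⟩⟩ | ⟨X1,j1,i1,hi1,⟨h1,h2⟩|⟨h1,h2⟩⟩
        · rw [hu] at h1; exact absurd h1 (by simp)
        · rw [hu] at h1
          obtain ⟨rfl, -⟩ := by simpa using h1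
          exact ⟨a2, h2⟩
        · rw [hu] at h1
          obtain ⟨rfl, -⟩ := by simpa using h1
          exact absurd h2 (hnm b.1 b.2 i j1)
        · rw [hu] at h2; exact absurd h2 (by simp)
        · rw [hu] at h1; exact absurd h1 (by simp)
        · rw [hu] at h2; exact absurd h2 (by simp)
    obtain ⟨w⟩ := hconn x ⟨y, hy⟩
    exact aux x ⟨y, hy⟩ w ⟨a, hxv⟩
  · -- enforcer case
    refine Or.inl ⟨x.1, x.2, ?_, X, j, hxv⟩
    ext y
    simp only [Set.mem_singleton_iff]
    constructor
    · intro hy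
      obtain ⟨w⟩ := hconn x ⟨y, hy⟩
      cases w with
      | nil => rfl
      | @cons _ b _ h p =>
        exfalso
        have hadj : (CGraph n k d 𝒻).Adj x.1.1 b.1.1 := h
        rcases cadj_cases hadj with
          ⟨i1,i2,j1,h1,h2⟩ | ⟨i1,a1,a2,h1,h2⟩ |
          ⟨i1,a1,j1,⟨h1,h2⟩|⟨h1,h2⟩⟩ | ⟨X1,j1,i1,hi1,⟨h1,h2⟩|⟨h1,h2⟩⟩
        · rw [hxv] at h1; exact absurd h1 (by simp)
        · rw [hxv] at h1; exact absurd h1 (by simp)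
        · rw [hxv] at h1; exact absurd h1 (by simp)
        · rw [hxv] at h2; exact absurd h2 (by simp)
        · exact absurd h2 (hnm b.1 b.2 i1 j1)
        · rw [hxv] at h2; exact absurd h2 (by simp)
    · rintro rfl; exact x.2

lemma cut_lemma (hcov : ∀ (i : Fin n) (j : Fin k), i ∈ σ j ↔ j = jm i)
    (B : Set ↥((delSet n k d 𝒻 σ)ᶜ)) (hconn : ((Gp σ).induce B).Connected)
    {x c : ↥((delSet n k d 𝒻 σ)ᶜ)} (hx : x ∈ B) (hc : c ∈ B)
    {i : Fin n} {a : Fin (d-1)} (hxv : x.1 = Sum.inr (Sum.inl (i,a)))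
    {i0 : Fin n} {j0 : Fin k} (hcv : c.1 = Sum.inl (i0,j0)) :
    (⟨Sum.inl (i, jm i), (mem_compl_inl σ).2 ((hcov i (jm i)).2 rfl)⟩ :
      ↥((delSet n k d 𝒻 σ)ᶜ)) ∈ B := by
  have aux : ∀ (u v : ↥B) (_ : ((Gp σ).induce B).Walk u v),
      (∃ a0, u.1.1 = Sum.inr (Sum.inl (i,a0))) →
      (∃ a0, v.1.1 = Sum.inr (Sum.inl (i,a0))) ∨
      (⟨Sum.inl (i, jm i), (mem_compl_inl σ).2 ((hcov i (jm i)).2 rfl)⟩ :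
        ↥((delSet n k d 𝒻 σ)ᶜ)) ∈ B := by
    intro u v w
    induction w with
    | nil => exact Or.inl
    | @cons a' b c' h p ih =>
      rintro ⟨a0, hu⟩
      have hadj : (CGraph n k d 𝒻).Adj a'.1.1 b.1.1 := h
      rcases cadj_cases hadj with
        ⟨i1,i2,j1,h1,h2⟩ | ⟨i1,a1,a2,h1,h2⟩ |
        ⟨i1,a1,j1,⟨h1,h2⟩|⟨h1,h2⟩⟩ | ⟨X1,j1,i1,hi1,⟨h1,h2⟩|⟨h1,h2⟩⟩
      · rw [hu] at h1; exact absurd h1 (by simp)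
      · rw [hu] at h1
        obtain ⟨rfl, -⟩ := by simpa using h1
        exact ih ⟨a2, h2⟩
      · rw [hu] at h1
        obtain ⟨rfl, -⟩ := by simpa using h1
        -- b is the surviving matrix vertex in row i
        have hmem : i ∈ σ j1 := (mem_compl_inl σ).1 (h2 ▸ b.1.2)
        have hj1 : j1 = jm i := (hcov i j1).1 hmem
        right
        have : b.1 = (⟨Sum.inl (i, jm i), (mem_compl_inl σ).2 ((hcov i (jm i)).2 rfl)⟩ :
            ↥((delSet n k d 𝒻 σ)ᶜ)) := Subtype.ext (by rw [h2, hj1])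
        exact this ▸ b.2
      · rw [hu] at h2; exact absurd h2 (by simp)
      · rw [hu] at h1; exact absurd h1 (by simp)
      · rw [hu] at h2; exact absurd h2 (by simp)
  obtain ⟨w⟩ := hconn ⟨x, hx⟩ ⟨c, hc⟩
  rcases aux _ _ w ⟨a, hxv⟩ with ⟨a0, hbad⟩ | hgood
  · rw [hcv] at hbad; exact absurd hbad (by simp)
  · exact hgood

end Sub

section Count

lemma pigeon {κ V : Type*} (φ : κ → Set V)
    (hdisj : Pairwise fun a b => Disjoint (φ a) (φ b)) (F : Set V) (hF : F.Finite)
    (s : Finset κ) (hhit : ∀ t ∈ s, (φ t ∩ F).Nonempty) : s.card ≤ F.ncard := by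
  classical
  have key : ∀ t : ↥s, ∃ x, x ∈ φ t.1 ∩ F := fun t => hhit t.1 t.2
  choose g hg using key
  have hinj : Function.Injective g := by
    intro t1 t2 he
    by_contra hne
    have hd := hdisj (fun h : (t1 : κ) = t2 => hne (Subtype.ext h))
    exact Set.disjoint_left.1 hd (hg t1).1 (he ▸ (hg t2).1)
  calc s.card = s.attach.card := by rw [Finset.card_attach]
    _ = (s.attach.image g).card := (Finset.card_image_of_injective _ hinj).symm
    _ ≤ hF.toFinset.card := Finset.card_le_card (by
        intro x hx
        simp only [Finset.mem_image] at hx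
        obtain ⟨t, -, rfl⟩ := hx
        exact hF.mem_toFinset.2 (hg t).2)
    _ = F.ncard := (Set.ncard_eq_toFinset_card F hF).symm

lemma ncard_le_of_subset_image {α β : Type*} (B : Set α) (s : Finset β) (g : β → α)
    (h : B ⊆ g '' ↑s) : B.ncard ≤ s.card := by
  calc B.ncard ≤ (g '' ↑s).ncard := Set.ncard_le_ncard h (s.finite_toSet.image g)
    _ ≤ (↑s : Set β).ncard := Set.ncard_image_le s.finite_toSet
    _ = s.card := Set.ncard_coe_finset s

lemma finite_of_subset_image {α β : Type*} (B : Set α) (s : Finset β) (g : β → α)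
    (h : B ⊆ g '' ↑s) : B.Finite :=
  (s.finite_toSet.image g).subset h

variable {n k d : ℕ} {𝒻 : Finset (Finset (Fin n))} (σ : Fin k → Finset (Fin n))

def Cset (n k d : ℕ) (𝒻 : Finset (Finset (Fin n))) (σ : Fin k → Finset (Fin n)) (j : Fin k) :
    Set ↥((delSet n k d 𝒻 σ)ᶜ) :=
  {x | ∃ i ∈ σ j, x.1 = Sum.inl (i,j)}

def Dset (n k d : ℕ) (𝒻 : Finset (Finset (Fin n))) (σ : Fin k → Finset (Fin n)) (i : Fin n) :
    Set ↥((delSet n k d 𝒻 σ)ᶜ) :=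
  {x | ∃ a, x.1 = Sum.inr (Sum.inl (i,a))}

lemma Cset_subset (j : Fin k) : Cset n k d 𝒻 σ j ⊆
    (fun i : ↥(σ j) => (⟨Sum.inl (i.1, j), (mem_compl_inl σ).2 i.2⟩ :
      ↥((delSet n k d 𝒻 σ)ᶜ))) '' ↑(σ j).attach := by
  rintro x ⟨i, hi, hx⟩
  exact ⟨⟨i, hi⟩, by simp, Subtype.ext hx.symm⟩

lemma Cset_ncard (j : Fin k) : (Cset n k d 𝒻 σ j).ncard ≤ (σ j).card := by
  have := ncard_le_of_subset_image _ _ _ (Cset_subset (d := d) (𝒻 := 𝒻) σ j)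
  simpa using this

lemma Cset_finite (j : Fin k) : (Cset n k d 𝒻 σ j).Finite :=
  finite_of_subset_image _ _ _ (Cset_subset (d := d) (𝒻 := 𝒻) σ j)

lemma Dset_subset (i : Fin n) : Dset n k d 𝒻 σ i ⊆
    (fun a : Fin (d-1) => (⟨Sum.inr (Sum.inl (i, a)), mem_compl_inr σ⟩ :
      ↥((delSet n k d 𝒻 σ)ᶜ))) '' ↑(Finset.univ : Finset (Fin (d-1))) := by
  rintro x ⟨a, hx⟩
  exact ⟨a, by simp, Subtype.ext hx.symm⟩

lemma Dset_ncard (i : Fin n) : (Dset n k d 𝒻 σ i).ncard ≤ d - 1 := by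
  have := ncard_le_of_subset_image _ _ _ (Dset_subset (d := d) (𝒻 := 𝒻) σ i)
  simpa using this

lemma Dset_finite (i : Fin n) : (Dset n k d 𝒻 σ i).Finite :=
  finite_of_subset_image _ _ _ (Dset_subset (d := d) (𝒻 := 𝒻) σ i)

end Count

section NoK
variable {n k d : ℕ} {𝒻 : Finset (Finset (Fin n))}

lemma no_Kd1 (σ : Fin k → Finset (Fin n)) (jm : Fin n → Fin k) (hd : 3 ≤ d)
    (hcov : ∀ (i : Fin n) (j : Fin k), i ∈ σ j ↔ j = jm i)
    (hσ𝒻 : ∀ j, σ j ∈ 𝒻) (hσcard : ∀ j, (σ j).card = d) :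
    ¬ (Gp (n := n) (k := k) (d := d) (𝒻 := 𝒻) σ).HasMinor (⊤ : SimpleGraph (Fin (d+1))) := by
  classical
  rintro ⟨φ, hconn, hdisj, hadj⟩
  have hne : ∀ w, (φ w).Nonempty := fun w => by
    obtain ⟨x⟩ := (hconn w).nonempty; exact ⟨x.1, x.2⟩
  obtain ⟨x0, hx0⟩ := hne 0
  set j : Fin k := mLab jm x0.1 with hj
  have hlab : ∀ w, ∀ x ∈ φ w, mLab jm x.1 = j := by
    intro w x hx
    by_cases hw : w = 0
    · subst hw; exact lab_const σ jm hcov _ (hconn 0) hx hx0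
    · obtain ⟨u, hu, v, hv, huv⟩ := hadj (by simpa using hw : (⊤ : SimpleGraph (Fin (d+1))).Adj w 0)
      have h1 : mLab jm x.1 = mLab jm u.1 := lab_const σ jm hcov _ (hconn w) hx hu
      have h2 : mLab jm u.1 = mLab jm v.1 := adj_lab σ jm hcov u.2 v.2 huv
      have h3 : mLab jm v.1 = j := lab_const σ jm hcov _ (hconn 0) hv hx0
      exact (h1.trans h2).trans h3
  set A : Finset (Fin (d+1)) :=
    Finset.univ.filter (fun w => (φ w ∩ Cset n k d 𝒻 σ j).Nonempty) with hA
  have hAcard : A.card ≤ d := by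
    have := pigeon φ hdisj (Cset n k d 𝒻 σ j) (Cset_finite σ j) A
      (fun t ht => (Finset.mem_filter.1 ht).2)
    exact this.trans ((Cset_ncard σ j).trans_eq (hσcard j))
  obtain ⟨w₀, hw₀⟩ : ∃ w₀, w₀ ∉ A := by
    by_contra hall; push_neg at hall
    have : Finset.univ.card ≤ A.card := Finset.card_le_card (fun w _ => hall w)
    rw [Finset.card_univ, Fintype.card_fin] at this
    omega
  have hempty : ∀ x ∈ φ w₀, x ∉ Cset n k d 𝒻 σ j := by
    intro x hx hxc
    exact hw₀ (Finset.mem_filter.2 ⟨Finset.mem_univ _, ⟨x, hx, hxc⟩⟩)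
  have hnm : ∀ x ∈ φ w₀, ∀ (i : Fin n) (j0 : Fin k), x.1 ≠ Sum.inl (i,j0) := by
    intro x hx i j0 hvx
    have hl : j0 = j := by
      have := hlab w₀ x hx
      rw [hvx] at this; simpa [mLab] using this
    subst hl
    exact hempty x hx ⟨i, (mem_compl_inl σ).1 (hvx ▸ x.2), hvx⟩
  have hdcard : (Finset.univ.erase w₀ : Finset (Fin (d+1))).card = d := by
    rw [Finset.card_erase_of_mem (Finset.mem_univ _), Finset.card_univ, Fintype.card_fin]
    omega
  rcases classify σ (φ w₀) (hconn w₀) hnm with ⟨e, he, hBe, X, j0, hev⟩ | ⟨i, hdum⟩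
  · -- enforcer singleton case
    have hj0 : j0 = j := by
      have := hlab w₀ e he
      rw [hev] at this; simpa [mLab] using this
    rw [hj0] at hev
    set N : Set ↥((delSet n k d 𝒻 σ)ᶜ) :=
      {x | ∃ i0 ∈ X.1 ∩ σ j, x.1 = Sum.inl (i0, j)} with hN
    have hNsub : N ⊆ (fun i0 : ↥(X.1 ∩ σ j) =>
        (⟨Sum.inl (i0.1, j), (mem_compl_inl σ).2 (Finset.mem_inter.1 i0.2).2⟩ :
          ↥((delSet n k d 𝒻 σ)ᶜ))) '' ↑(X.1 ∩ σ j).attach := by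
      rintro x ⟨i0, hi0, hx⟩
      exact ⟨⟨i0, hi0⟩, by simp, Subtype.ext hx.symm⟩
    have hXcard : (X.1 ∩ σ j).card ≤ d - 1 := by
      have hsub : X.1 ∩ σ j ⊆ X.1 := Finset.inter_subset_left
      have hnee : X.1 ∩ σ j ≠ X.1 := by
        intro hE
        have hsub2 : X.1 ⊆ σ j := by rw [← hE]; exact Finset.inter_subset_right
        have : X.1 = σ j := Finset.eq_of_subset_of_card_le hsub2
          (by rw [hσcard j, X.2.1])
        exact X.2.2 (this ▸ hσ𝒻 j)
      have hlt : (X.1 ∩ σ j).card < X.1.card :=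
        Finset.card_lt_card (ssubset_of_subset_of_ne hsub hnee)
      have := X.2.1
      omega
    have hNcard : N.ncard ≤ d - 1 := by
      have h1 := ncard_le_of_subset_image _ _ _ hNsub
      rw [Finset.card_attach] at h1
      exact h1.trans hXcard
    have hNfin : N.Finite := finite_of_subset_image _ _ _ hNsub
    have hhit : ∀ t ∈ Finset.univ.erase w₀, (φ t ∩ N).Nonempty := by
      intro t ht
      have htne : t ≠ w₀ := (Finset.mem_erase.1 ht).1
      obtain ⟨u, hu, v, hv, huv⟩ := hadj (by simpa using htne :
        (⊤ : SimpleGraph (Fin (d+1))).Adj t w₀)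
      have hv' : v = e := by rw [hBe] at hv; exact hv
      subst hv'
      have hadj2 : (CGraph n k d 𝒻).Adj u.1 v.1 := huv
      rcases cadj_cases hadj2 with ⟨i1,i2,j1,h1,h2⟩ | ⟨i1,a1,a2,h1,h2⟩ |
        ⟨i1,a1,j1,⟨h1,h2⟩|⟨h1,h2⟩⟩ | ⟨X1,j1,i1,hi1,⟨h1,h2⟩|⟨h1,h2⟩⟩
      · exact absurd (hev.symm.trans h2) (by simp)
      · exact absurd (hev.symm.trans h2) (by simp)
      · exact absurd (hev.symm.trans h2) (by simp)
      · exact absurd (hev.symm.trans h1) (by simp)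
      · exact absurd (hev.symm.trans h2) (by simp)
      · -- v enforcer, u matrix
        have h5 := hev.symm.trans h1
        simp only [Sum.inr.injEq, Prod.mk.injEq] at h5
        obtain ⟨rfl, rfl⟩ := h5
        have hsurv : i1 ∈ σ j := (mem_compl_inl σ).1 (h2 ▸ u.2)
        exact ⟨u, hu, ⟨i1, Finset.mem_inter.2 ⟨hi1, hsurv⟩, h2⟩⟩
    have := pigeon φ hdisj N hNfin _ hhit
    rw [hdcard] at this
    omega
  · -- dummy case
    have hsubD : φ w₀ ⊆ Dset n k d 𝒻 σ i := fun x hx => hdum x hx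
    set mv : ↥((delSet n k d 𝒻 σ)ᶜ) :=
      ⟨Sum.inl (i, jm i), (mem_compl_inl σ).2 ((hcov i (jm i)).2 rfl)⟩ with hmv
    set F : Set ↥((delSet n k d 𝒻 σ)ᶜ) := (Dset n k d 𝒻 σ i \ φ w₀) ∪ {mv} with hF
    have hFfin : F.Finite := (((Dset_finite σ i).subset Set.diff_subset).union
      (Set.finite_singleton _))
    have hFcard : F.ncard ≤ d - 1 := by
      have h1 : (Dset n k d 𝒻 σ i \ φ w₀).ncard
          = (Dset n k d 𝒻 σ i).ncard - (φ w₀).ncard :=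
        Set.ncard_diff hsubD ((Dset_finite σ i).subset hsubD)
      have h2 : 0 < (φ w₀).ncard :=
        (Set.ncard_pos ((Dset_finite σ i).subset hsubD)).2 (hne w₀)
      have h3 := Dset_ncard (d := d) (𝒻 := 𝒻) σ i
      have h4 := Set.ncard_union_le (Dset n k d 𝒻 σ i \ φ w₀) {mv}
      rw [← hF, Set.ncard_singleton] at h4
      omega
    have hhit : ∀ t ∈ Finset.univ.erase w₀, (φ t ∩ F).Nonempty := by
      intro t ht
      have htne : t ≠ w₀ := (Finset.mem_erase.1 ht).1
      obtain ⟨u, hu, v, hv, huv⟩ := hadj (by simpa using htne :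
        (⊤ : SimpleGraph (Fin (d+1))).Adj t w₀)
      obtain ⟨a0, hva⟩ := hdum v hv
      have hadj2 : (CGraph n k d 𝒻).Adj u.1 v.1 := huv
      refine ⟨u, hu, ?_⟩
      rcases cadj_cases hadj2 with ⟨i1,i2,j1,h1,h2⟩ | ⟨i1,a1,a2,h1,h2⟩ |
        ⟨i1,a1,j1,⟨h1,h2⟩|⟨h1,h2⟩⟩ | ⟨X1,j1,i1,hi1,⟨h1,h2⟩|⟨h1,h2⟩⟩
      · exact absurd (hva.symm.trans h2) (by simp)
      · -- both dummies
        have h5 := hva.symm.trans h2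
        simp only [Sum.inr.injEq, Sum.inl.injEq, Prod.mk.injEq] at h5
        obtain ⟨rfl, -⟩ := h5
        have huD : u ∈ Dset n k d 𝒻 σ i := ⟨a1, h1⟩
        have hunotin : u ∉ φ w₀ := fun hmem =>
          Set.disjoint_left.1 (hdisj htne) hu hmem
        exact Or.inl ⟨huD, hunotin⟩
      · exact absurd (hva.symm.trans h2) (by simp)
      · -- v dummy, u matrix
        have h5 := hva.symm.trans h1
        simp only [Sum.inr.injEq, Sum.inl.injEq, Prod.mk.injEq] at h5
        obtain ⟨rfl, -⟩ := h5
        have hsurv : i ∈ σ j1 := (mem_compl_inl σ).1 (h2 ▸ u.2)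
        have hj1 : j1 = jm i := (hcov i j1).1 hsurv
        subst hj1
        exact Or.inr (Subtype.ext h2)
      · exact absurd (hva.symm.trans h2) (by simp)
      · exact absurd (hva.symm.trans h1) (by simp)
    have := pigeon φ hdisj F hFfin _ hhit
    rw [hdcard] at this
    omega

end NoK
section NoP
variable {n k d : ℕ} {𝒻 : Finset (Finset (Fin n))}

lemma no_P4d (σ : Fin k → Finset (Fin n)) (jm : Fin n → Fin k) (hd : 3 ≤ d)
    (hcov : ∀ (i : Fin n) (j : Fin k), i ∈ σ j ↔ j = jm i)
    (hσ𝒻 : ∀ j, σ j ∈ 𝒻) (hσcard : ∀ j, (σ j).card = d) :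
    ¬ (Gp (n := n) (k := k) (d := d) (𝒻 := 𝒻) σ).HasMinor
      (SimpleGraph.pathGraph (4 * d)) := by
  classical
  rintro ⟨φ, hconn, hdisj, hadj⟩
  have hm0 : 0 < 4 * d := by omega
  have hne : ∀ w, (φ w).Nonempty := fun w => by
    obtain ⟨x⟩ := (hconn w).nonempty; exact ⟨x.1, x.2⟩
  obtain ⟨x0, hx0⟩ := hne ⟨0, hm0⟩
  set j : Fin k := mLab jm x0.1 with hj
  have hedge : ∀ (s : ℕ) (h2 : s + 1 < 4 * d),
      ∃ u ∈ φ ⟨s, by omega⟩, ∃ v ∈ φ ⟨s+1, h2⟩, (Gp σ).Adj u v := by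
    intro s h2
    exact hadj (SimpleGraph.pathGraph_adj.2 (Or.inl rfl))
  have hlab0 : ∀ (s : ℕ) (hs : s < 4 * d), ∀ x ∈ φ ⟨s, hs⟩, mLab jm x.1 = j := by
    intro s
    induction s with
    | zero => exact fun hs x hx => lab_const σ jm hcov _ (hconn _) hx hx0
    | succ s ih =>
      intro hs x hx
      obtain ⟨u, hu, v, hv, huv⟩ := hedge s hs
      have h1 : mLab jm x.1 = mLab jm v.1 := lab_const σ jm hcov _ (hconn _) hx hv
      have h2 : mLab jm v.1 = mLab jm u.1 := (adj_lab σ jm hcov u.2 v.2 huv).symm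
      have h3 : mLab jm u.1 = j := ih (by omega) u hu
      exact (h1.trans h2).trans h3
  have hlab : ∀ (t : Fin (4 * d)), ∀ x ∈ φ t, mLab jm x.1 = j := by
    intro t x hx
    exact hlab0 t.1 t.2 x hx
  set A : Finset (Fin (4 * d)) :=
    Finset.univ.filter (fun t => (φ t ∩ Cset n k d 𝒻 σ j).Nonempty) with hA
  set E : Finset (Fin (4 * d)) :=
    Finset.univ.filter (fun t => t ∉ A ∧ ∃ x ∈ φ t, ∃ X j0,
      x.1 = Sum.inr (Sum.inr (X, j0))) with hE
  set R : Finset (Fin (4 * d)) :=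
    Finset.univ.filter (fun t => t ∉ A ∧ t ∉ E) with hR
  have hAcard : A.card ≤ d := by
    have := pigeon φ hdisj (Cset n k d 𝒻 σ j) (Cset_finite σ j) A
      (fun t ht => (Finset.mem_filter.1 ht).2)
    exact this.trans ((Cset_ncard σ j).trans_eq (hσcard j))
  have hmfree : ∀ t, t ∉ A → ∀ x ∈ φ t, ∀ (i : Fin n) (j0 : Fin k),
      x.1 ≠ Sum.inl (i, j0) := by
    intro t ht x hx i j0 hvx
    have hl : j0 = j := by
      have := hlab t x hx
      rw [hvx] at this; simpa [mLab] using this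
    subst hl
    exact ht (Finset.mem_filter.2 ⟨Finset.mem_univ _,
      ⟨x, hx, ⟨i, (mem_compl_inl σ).1 (hvx ▸ x.2), hvx⟩⟩⟩)
  have hEsing : ∀ t ∈ E, ∃ e ∈ φ t, φ t = {e} ∧ ∃ X,
      e.1 = Sum.inr (Sum.inr (X, j)) := by
    intro t ht
    obtain ⟨-, htA, x, hx, X0, j0, hxv⟩ := Finset.mem_filter.1 ht
    rcases classify σ (φ t) (hconn t) (hmfree t htA) with
      ⟨e, he, hBe, X, j1, hev⟩ | ⟨i, hdum⟩
    · have hj1 : j1 = j := by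
        have := hlab t e he
        rw [hev] at this; simpa [mLab] using this
      rw [hj1] at hev
      exact ⟨e, he, hBe, X, hev⟩
    · obtain ⟨a, ha⟩ := hdum x hx
      rw [hxv] at ha; exact absurd ha (by simp)
  have hRdum : ∀ t, t ∈ R → ∃ i : Fin n, ∀ x ∈ φ t, ∃ a,
      x.1 = Sum.inr (Sum.inl (i, a)) := by
    intro t ht
    obtain ⟨-, htA, htE⟩ := Finset.mem_filter.1 ht
    rcases classify σ (φ t) (hconn t) (hmfree t htA) with
      ⟨e, he, hBe, X, j1, hev⟩ | ⟨i, hdum⟩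
    · exact absurd (Finset.mem_filter.2 ⟨Finset.mem_univ _, htA, e, he, X, j1, hev⟩) htE
    · exact ⟨i, hdum⟩
  choose row hrow using hRdum
  set mv : Fin n → ↥((delSet n k d 𝒻 σ)ᶜ) := fun i =>
    ⟨Sum.inl (i, jm i), (mem_compl_inl σ).2 ((hcov i (jm i)).2 rfl)⟩ with hmv
  have sameRow : ∀ (s : ℕ) (h2 : s + 1 < 4 * d)
      (hs : (⟨s, by omega⟩ : Fin (4*d)) ∈ R) (hs1 : (⟨s+1, h2⟩ : Fin (4*d)) ∈ R),
      row ⟨s, by omega⟩ hs = row ⟨s+1, h2⟩ hs1 := by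
    intro s h2 hs hs1
    obtain ⟨u, hu, v, hv, huv⟩ := hedge s h2
    obtain ⟨a0, hua⟩ := hrow _ hs u hu
    obtain ⟨b0, hvb⟩ := hrow _ hs1 v hv
    have hadj2 : (CGraph n k d 𝒻).Adj u.1 v.1 := huv
    rcases cadj_cases hadj2 with ⟨i1,i2,j1,h1,h2'⟩ | ⟨i1,a1,a2,h1,h2'⟩ |
      ⟨i1,a1,j1,⟨h1,h2'⟩|⟨h1,h2'⟩⟩ | ⟨X1,j1,i1,hi1,⟨h1,h2'⟩|⟨h1,h2'⟩⟩
    · exact absurd (hua.symm.trans h1) (by simp)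
    · have e1 := hua.symm.trans h1
      have e2 := hvb.symm.trans h2'
      simp only [Sum.inr.injEq, Sum.inl.injEq, Prod.mk.injEq] at e1 e2
      rw [e1.1, e2.1]
    · exact absurd (hvb.symm.trans h2') (by simp)
    · exact absurd (hua.symm.trans h2') (by simp)
    · exact absurd (hvb.symm.trans h2') (by simp)
    · exact absurd (hua.symm.trans h2') (by simp)
  have chain : ∀ (a b : ℕ) (hab : a ≤ b) (hb : b < 4 * d)
      (_ : ∀ s, a ≤ s → s ≤ b → ∀ (hs : s < 4 * d), (⟨s, hs⟩ : Fin (4*d)) ∈ R)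
      (hA' : (⟨a, by omega⟩ : Fin (4*d)) ∈ R) (hB' : (⟨b, hb⟩ : Fin (4*d)) ∈ R),
      row ⟨a, by omega⟩ hA' = row ⟨b, hb⟩ hB' := by
    intro a b hab
    induction hab with
    | refl => intro hb _ h1 h2; rfl
    | @step b' hab ih =>
      intro hb hall hA' hB'
      have hb' : b' < 4 * d := by omega
      have hmem : (⟨b', hb'⟩ : Fin (4*d)) ∈ R := hall b' hab (by omega) hb'
      have h1 := ih hb' (fun s hs1 hs2 hs => hall s hs1 (by omega) hs) hA' hmem
      have h2 := sameRow b' hb hmem hB'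
      exact h1.trans h2
  have bdyL : ∀ (s : ℕ) (h2 : s + 1 < 4 * d)
      (hs1 : (⟨s+1, h2⟩ : Fin (4*d)) ∈ R) (_ : (⟨s, by omega⟩ : Fin (4*d)) ∉ R),
      mv (row ⟨s+1, h2⟩ hs1) ∈ φ ⟨s, by omega⟩ := by
    intro s h2 hs1 hs
    obtain ⟨u, hu, v, hv, huv⟩ := hedge s h2
    obtain ⟨b0, hvb⟩ := hrow _ hs1 v hv
    set i : Fin n := row ⟨s+1, h2⟩ hs1
    have hadj2 : (CGraph n k d 𝒻).Adj u.1 v.1 := huv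
    have hAorE : (⟨s, by omega⟩ : Fin (4*d)) ∈ A ∨ (⟨s, by omega⟩ : Fin (4*d)) ∈ E := by
      by_contra hcon
      push_neg at hcon
      exact hs (Finset.mem_filter.2 ⟨Finset.mem_univ _, hcon.1, hcon.2⟩)
    rcases cadj_cases hadj2 with ⟨i1,i2,j1,h1,h2'⟩ | ⟨i1,a1,a2,h1,h2'⟩ |
      ⟨i1,a1,j1,⟨h1,h2'⟩|⟨h1,h2'⟩⟩ | ⟨X1,j1,i1,hi1,⟨h1,h2'⟩|⟨h1,h2'⟩⟩
    · exact absurd (hvb.symm.trans h2') (by simp)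
    · have e1 := hvb.symm.trans h2'
      simp only [Sum.inr.injEq, Sum.inl.injEq, Prod.mk.injEq] at e1
      obtain ⟨e1, -⟩ := e1
      rcases hAorE with hsA | hsE
      · obtain ⟨c, hc, i0, hi0, hcv⟩ := (Finset.mem_filter.1 hsA).2
        exact cut_lemma σ jm hcov (φ _) (hconn _) hu hc
          (show u.1 = Sum.inr (Sum.inl (i, a1)) by rw [h1, e1]) hcv
      · obtain ⟨e, he, hBe, X, hev⟩ := hEsing _ hsE
        have heq : u = e := by rw [hBe] at hu; exact hu
        rw [heq] at h1
        exact absurd (hev.symm.trans h1) (by simp)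
    · exact absurd (hvb.symm.trans h2') (by simp)
    · have e1 := hvb.symm.trans h1
      simp only [Sum.inr.injEq, Sum.inl.injEq, Prod.mk.injEq] at e1
      obtain ⟨e1, -⟩ := e1
      have hsurv : i1 ∈ σ j1 := (mem_compl_inl σ).1 (h2' ▸ u.2)
      have hj1 : j1 = jm i1 := (hcov i1 j1).1 hsurv
      have heq : u = mv i := by
        apply Subtype.ext
        rw [h2', hj1, e1]
      exact heq ▸ hu
    · exact absurd (hvb.symm.trans h2') (by simp)
    · exact absurd (hvb.symm.trans h1) (by simp)
  have bdyR : ∀ (s s' : ℕ) (hss : s' = s + 1) (h2 : s' < 4 * d)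
      (hs : (⟨s, by omega⟩ : Fin (4*d)) ∈ R) (_ : (⟨s', h2⟩ : Fin (4*d)) ∉ R),
      mv (row ⟨s, by omega⟩ hs) ∈ φ ⟨s', h2⟩ := by
    intro s s' hss
    subst hss
    intro h2 hs hs1
    obtain ⟨u, hu, v, hv, huv⟩ := hedge s h2
    obtain ⟨a0, hua⟩ := hrow _ hs u hu
    set i : Fin n := row ⟨s, by omega⟩ hs
    have hadj2 : (CGraph n k d 𝒻).Adj u.1 v.1 := huv
    have hAorE : (⟨s+1, h2⟩ : Fin (4*d)) ∈ A ∨ (⟨s+1, h2⟩ : Fin (4*d)) ∈ E := by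
      by_contra hcon
      push_neg at hcon
      exact hs1 (Finset.mem_filter.2 ⟨Finset.mem_univ _, hcon.1, hcon.2⟩)
    rcases cadj_cases hadj2 with ⟨i1,i2,j1,h1,h2'⟩ | ⟨i1,a1,a2,h1,h2'⟩ |
      ⟨i1,a1,j1,⟨h1,h2'⟩|⟨h1,h2'⟩⟩ | ⟨X1,j1,i1,hi1,⟨h1,h2'⟩|⟨h1,h2'⟩⟩
    · exact absurd (hua.symm.trans h1) (by simp)
    · have e1 := hua.symm.trans h1
      simp only [Sum.inr.injEq, Sum.inl.injEq, Prod.mk.injEq] at e1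
      obtain ⟨e1, -⟩ := e1
      rcases hAorE with hsA | hsE
      · obtain ⟨c, hc, i0, hi0, hcv⟩ := (Finset.mem_filter.1 hsA).2
        exact cut_lemma σ jm hcov (φ _) (hconn _) hv hc
          (show v.1 = Sum.inr (Sum.inl (i, a2)) by rw [h2', ← e1]) hcv
      · obtain ⟨e, he, hBe, X, hev⟩ := hEsing _ hsE
        have heq : v = e := by rw [hBe] at hv; exact hv
        rw [heq] at h2'
        exact absurd (hev.symm.trans h2') (by simp)
    · -- u dummy, v matrix: v is the cut vertex
      have e1 := hua.symm.trans h1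
      simp only [Sum.inr.injEq, Sum.inl.injEq, Prod.mk.injEq] at e1
      obtain ⟨e1, -⟩ := e1
      have hsurv : i1 ∈ σ j1 := (mem_compl_inl σ).1 (h2' ▸ v.2)
      have hj1 : j1 = jm i1 := (hcov i1 j1).1 hsurv
      have heq : v = mv i := by
        apply Subtype.ext
        rw [h2', hj1, ← e1]
      exact heq ▸ hv
    · exact absurd (hua.symm.trans h2') (by simp)
    · exact absurd (hua.symm.trans h1) (by simp)
    · exact absurd (hua.symm.trans h2') (by simp)
  set Rn : Set ℕ := {s | ∃ h : s < 4 * d, (⟨s, h⟩ : Fin (4*d)) ∈ R} with hRn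
  have notI : ∀ t : Fin (4*d), t ∈ R →
      (∀ s (hs : s < 4*d), s ≤ t.1 → (⟨s, hs⟩ : Fin (4*d)) ∈ R) ∨
      (∀ s (hs : s < 4*d), t.1 ≤ s → (⟨s, hs⟩ : Fin (4*d)) ∈ R) := by
    intro t ht
    by_contra hcon
    push_neg at hcon
    obtain ⟨⟨s1, hs1, hle1, hnot1⟩, ⟨s2, hs2, hle2, hnot2⟩⟩ := hcon
    have hs1t : s1 < t.1 := by
      rcases Nat.lt_or_ge s1 t.1 with h | h
      · exact h
      · exfalso
        have he : (⟨s1, hs1⟩ : Fin (4*d)) = t := Fin.ext (le_antisymm hle1 h)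
        exact hnot1 (by rw [he]; exact ht)
    have hs2t : t.1 < s2 := by
      rcases Nat.lt_or_ge t.1 s2 with h | h
      · exact h
      · exfalso
        have he : (⟨s2, hs2⟩ : Fin (4*d)) = t := Fin.ext (le_antisymm h hle2)
        exact hnot2 (by rw [he]; exact ht)
    set P : ℕ → Prop := fun s => s ∉ Rn with hP
    have hPs1 : P s1 := by
      rintro ⟨h, hmem⟩
      exact hnot1 hmem
    set p : ℕ := Nat.findGreatest P t.1 with hp
    have hPp : P p := Nat.findGreatest_spec (le_of_lt hs1t) hPs1
    have hple : p ≤ t.1 := Nat.findGreatest_le _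
    have hpt : p ≠ t.1 := by
      intro hE
      apply hPp
      refine ⟨by omega, ?_⟩
      have he : (⟨p, by omega⟩ : Fin (4*d)) = t := Fin.ext hE
      rw [he]; exact ht
    have hint1 : ∀ s, p < s → s ≤ t.1 → s ∈ Rn := by
      intro s hps hst
      by_contra hsr
      exact Nat.findGreatest_is_greatest hps hst hsr
    have hQ : ∃ s, t.1 < s ∧ s < 4*d ∧ s ∉ Rn := by
      refine ⟨s2, hs2t, hs2, ?_⟩
      rintro ⟨h, hmem⟩
      exact hnot2 hmem
    obtain ⟨hqt, hq4, hqR⟩ : t.1 < Nat.find hQ ∧ Nat.find hQ < 4*d ∧ Nat.find hQ ∉ Rn :=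
      Nat.find_spec hQ
    set q : ℕ := Nat.find hQ with hq
    have hint2 : ∀ s, t.1 < s → s < q → s ∈ Rn := by
      intro s hts hsq
      by_contra hsr
      exact Nat.find_min hQ hsq ⟨hts, by omega, hsr⟩
    have hrun : ∀ s, p + 1 ≤ s → s ≤ q - 1 → ∀ (hs : s < 4*d),
        (⟨s, hs⟩ : Fin (4*d)) ∈ R := by
      intro s hps hsq hs
      rcases Nat.lt_or_ge s t.1 with h | h
      · obtain ⟨h', hmem⟩ := hint1 s (by omega) (by omega)
        exact hmem
      · rcases Nat.eq_or_lt_of_le h with h' | h'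
        · have he : (⟨s, hs⟩ : Fin (4*d)) = t := Fin.ext h'.symm
          rw [he]; exact ht
        · obtain ⟨h'', hmem⟩ := hint2 s h' (by omega)
          exact hmem
    have hp1R : (⟨p+1, by omega⟩ : Fin (4*d)) ∈ R := hrun (p+1) le_rfl (by omega) (by omega)
    have hq1R : (⟨q-1, by omega⟩ : Fin (4*d)) ∈ R := hrun (q-1) (by omega) le_rfl (by omega)
    have hrowseq : row ⟨p+1, by omega⟩ hp1R = row ⟨q-1, by omega⟩ hq1R :=
      chain (p+1) (q-1) (by omega) (by omega) hrun hp1R hq1R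
    have hPp' : (⟨p, by omega⟩ : Fin (4*d)) ∉ R := fun hmem => hPp ⟨by omega, hmem⟩
    have hqR' : (⟨q, hq4⟩ : Fin (4*d)) ∉ R := fun hmem => hqR ⟨hq4, hmem⟩
    have hL := bdyL p (by omega) hp1R hPp'
    have hR2 := bdyR (q-1) q (by omega) hq4 hq1R hqR'
    have hne2 : (⟨p, by omega⟩ : Fin (4*d)) ≠ (⟨q, hq4⟩ : Fin (4*d)) := by
      intro hE
      simp only [Fin.mk.injEq] at hE
      omega
    apply Set.disjoint_left.1 (hdisj hne2) hL
    rw [hrowseq]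
    exact hR2
  set I0 : Finset (Fin (4*d)) := R.filter (fun t => ∀ s (hs : s < 4*d), s ≤ t.1 →
    (⟨s, hs⟩ : Fin (4*d)) ∈ R) with hI0
  set I1 : Finset (Fin (4*d)) := R.filter (fun t => ∀ s (hs : s < 4*d), t.1 ≤ s →
    (⟨s, hs⟩ : Fin (4*d)) ∈ R) with hI1
  have hRsub : R ⊆ I0 ∪ I1 := by
    intro t ht
    rcases notI t ht with h | h
    · exact Finset.mem_union_left _ (Finset.mem_filter.2 ⟨ht, h⟩)
    · exact Finset.mem_union_right _ (Finset.mem_filter.2 ⟨ht, h⟩)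
  have hI0card : I0.card ≤ d - 1 := by
    rcases Finset.eq_empty_or_nonempty I0 with hEm | hne0
    · simp [hEm]
    · set t0 : Fin (4*d) := I0.max' hne0 with ht0def
      have ht0 : t0 ∈ I0 := I0.max'_mem hne0
      obtain ⟨ht0R, ht0p⟩ := Finset.mem_filter.1 ht0
      have hhit : ∀ t ∈ I0, (φ t ∩ Dset n k d 𝒻 σ (row t0 ht0R)).Nonempty := by
        intro t ht
        obtain ⟨htR, htp⟩ := Finset.mem_filter.1 ht
        obtain ⟨x, hx⟩ := hne t
        have hle : t.1 ≤ t0.1 := I0.le_max' t ht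
        have hrows : row t htR = row t0 ht0R := by
          have := chain t.1 t0.1 hle t0.2 (fun s _ hs2 hs => ht0p s hs hs2) htR ht0R
          exact this
        obtain ⟨a, ha⟩ := hrow t htR x hx
        exact ⟨x, hx, ⟨a, by rw [ha, hrows]⟩⟩
      have := pigeon φ hdisj _ (Dset_finite σ (row t0 ht0R)) I0 hhit
      exact this.trans (Dset_ncard σ _)
  have hI1card : I1.card ≤ d - 1 := by
    rcases Finset.eq_empty_or_nonempty I1 with hEm | hne1
    · simp [hEm]
    · set t1 : Fin (4*d) := I1.min' hne1 with ht1def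
      have ht1 : t1 ∈ I1 := I1.min'_mem hne1
      obtain ⟨ht1R, ht1p⟩ := Finset.mem_filter.1 ht1
      have hhit : ∀ t ∈ I1, (φ t ∩ Dset n k d 𝒻 σ (row t1 ht1R)).Nonempty := by
        intro t ht
        obtain ⟨htR, htp⟩ := Finset.mem_filter.1 ht
        obtain ⟨x, hx⟩ := hne t
        have hle : t1.1 ≤ t.1 := I1.min'_le t ht
        have hrows : row t1 ht1R = row t htR := by
          exact chain t1.1 t.1 hle t.2 (fun s hs1 _ hs => ht1p s hs hs1) ht1R htR
        obtain ⟨a, ha⟩ := hrow t htR x hx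
        exact ⟨x, hx, ⟨a, by rw [ha, ← hrows]⟩⟩
      have := pigeon φ hdisj _ (Dset_finite σ (row t1 ht1R)) I1 hhit
      exact this.trans (Dset_ncard σ _)
  have hRcard : R.card ≤ 2 * (d - 1) := by
    have h1 : R.card ≤ (I0 ∪ I1).card := Finset.card_le_card hRsub
    have h2 := Finset.card_union_le I0 I1
    omega
  -- E is controlled by A
  have claim1 : ∀ t ∈ E, ∀ (h : t.1 + 1 < 4*d), (⟨t.1+1, h⟩ : Fin (4*d)) ∈ A := by
    intro t ht h
    obtain ⟨e, he, hBe, X, hev⟩ := hEsing t ht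
    obtain ⟨u, hu, v, hv, huv⟩ := hedge t.1 h
    have hu' : u ∈ φ t := hu
    have hueq : u = e := by rw [hBe] at hu'; exact hu'
    subst hueq
    have hadj2 : (CGraph n k d 𝒻).Adj u.1 v.1 := huv
    rcases cadj_cases hadj2 with ⟨i1,i2,j1,h1,h2'⟩ | ⟨i1,a1,a2,h1,h2'⟩ |
      ⟨i1,a1,j1,⟨h1,h2'⟩|⟨h1,h2'⟩⟩ | ⟨X1,j1,i1,hi1,⟨h1,h2'⟩|⟨h1,h2'⟩⟩
    · exact absurd (hev.symm.trans h1) (by simp)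
    · exact absurd (hev.symm.trans h1) (by simp)
    · exact absurd (hev.symm.trans h1) (by simp)
    · exact absurd (hev.symm.trans h2') (by simp)
    · -- u enforcer, v matrix
      have e1 := hev.symm.trans h1
      simp only [Sum.inr.injEq, Prod.mk.injEq] at e1
      obtain ⟨rfl, rfl⟩ := e1
      have hsurv : i1 ∈ σ j := (mem_compl_inl σ).1 (h2' ▸ v.2)
      exact Finset.mem_filter.2 ⟨Finset.mem_univ _, ⟨v, hv, ⟨i1, hsurv, h2'⟩⟩⟩
    · exact absurd (hev.symm.trans h2') (by simp)
  have hEcard : E.card ≤ A.card + 1 := by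
    set last : Fin (4*d) := ⟨4*d - 1, by omega⟩ with hlast
    set f : Fin (4*d) → Fin (4*d) :=
      fun t => if h : t.1 + 1 < 4*d then (⟨t.1+1, h⟩ : Fin (4*d)) else t with hf
    have hmap : ∀ t ∈ E, f t ∈ A ∪ {last} := by
      intro t ht
      by_cases h : t.1 + 1 < 4*d
      · have : f t = ⟨t.1+1, h⟩ := dif_pos h
        rw [this]
        exact Finset.mem_union_left _ (claim1 t ht h)
      · have : f t = t := dif_neg h
        rw [this]
        refine Finset.mem_union_right _ (Finset.mem_singleton.2 (Fin.ext ?_))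
        have h2 := t.2
        have hlv : (last : Fin (4*d)).val = 4*d - 1 := rfl
        rw [hlv]
        omega
    have hinj : Set.InjOn f ↑E := by
      intro t1 ht1 t2 ht2 hfe
      rw [Finset.mem_coe] at ht1 ht2
      by_cases c1 : t1.1 + 1 < 4*d <;> by_cases c2 : t2.1 + 1 < 4*d
      · rw [show f t1 = ⟨t1.1+1, c1⟩ from dif_pos c1,
          show f t2 = ⟨t2.1+1, c2⟩ from dif_pos c2] at hfe
        simp only [Fin.mk.injEq] at hfe
        exact Fin.ext (by omega)
      · exfalso
        rw [show f t1 = ⟨t1.1+1, c1⟩ from dif_pos c1, show f t2 = t2 from dif_neg c2] at hfe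
        have h1 : t2 ∈ A := hfe ▸ claim1 t1 ht1 c1
        exact (Finset.mem_filter.1 ht2).2.1 h1
      · exfalso
        rw [show f t2 = ⟨t2.1+1, c2⟩ from dif_pos c2, show f t1 = t1 from dif_neg c1] at hfe
        have h1 : t1 ∈ A := hfe ▸ claim1 t2 ht2 c2
        exact (Finset.mem_filter.1 ht1).2.1 h1
      · rw [show f t1 = t1 from dif_neg c1, show f t2 = t2 from dif_neg c2] at hfe
        exact hfe
    calc E.card ≤ (A ∪ {last}).card := Finset.card_le_card_of_injOn f hmap hinj
      _ ≤ A.card + 1 := (Finset.card_union_le _ _).trans (by simp)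
  have huniv : (Finset.univ : Finset (Fin (4*d))) ⊆ A ∪ E ∪ R := by
    intro t _
    by_cases h1 : t ∈ A
    · exact Finset.mem_union_left _ (Finset.mem_union_left _ h1)
    · by_cases h2 : t ∈ E
      · exact Finset.mem_union_left _ (Finset.mem_union_right _ h2)
      · exact Finset.mem_union_right _ (Finset.mem_filter.2 ⟨Finset.mem_univ _, h1, h2⟩)
  have htotal : 4 * d ≤ A.card + E.card + R.card := by
    have h1 : (Finset.univ : Finset (Fin (4*d))).card = 4*d := by simp
    have h2 := Finset.card_le_card huniv
    have h3 := Finset.card_union_le (A ∪ E) R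
    have h4 := Finset.card_union_le A E
    omega
  omega

end NoP

section TW

variable {n k d : ℕ} {𝒻 : Finset (Finset (Fin n))}

lemma Nset_ncard (σ : Fin k → Finset (Fin n)) (hσ𝒻 : ∀ j, σ j ∈ 𝒻)
    (hσcard : ∀ j, (σ j).card = d) (X : EnforcerIdx n d 𝒻) (j : Fin k) :
    ({x | ∃ i ∈ X.1 ∩ σ j, x.1 = Sum.inl (i,j)} :
      Set ↥((delSet n k d 𝒻 σ)ᶜ)).ncard ≤ d - 1 := by
  have hNsub : ({x | ∃ i ∈ X.1 ∩ σ j, x.1 = Sum.inl (i,j)} :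
      Set ↥((delSet n k d 𝒻 σ)ᶜ)) ⊆ (fun i0 : ↥(X.1 ∩ σ j) =>
      (⟨Sum.inl (i0.1, j), (mem_compl_inl σ).2 (Finset.mem_inter.1 i0.2).2⟩ :
        ↥((delSet n k d 𝒻 σ)ᶜ))) '' ↑(X.1 ∩ σ j).attach := by
    rintro x ⟨i0, hi0, hx⟩
    exact ⟨⟨i0, hi0⟩, by simp, Subtype.ext hx.symm⟩
  have hXcard : (X.1 ∩ σ j).card ≤ d - 1 := by
    have hsub : X.1 ∩ σ j ⊆ X.1 := Finset.inter_subset_left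
    have hnee : X.1 ∩ σ j ≠ X.1 := by
      intro hE
      have hsub2 : X.1 ⊆ σ j := by rw [← hE]; exact Finset.inter_subset_right
      have : X.1 = σ j := Finset.eq_of_subset_of_card_le hsub2
        (by rw [hσcard j, X.2.1])
      exact X.2.2 (this ▸ hσ𝒻 j)
    have hlt : (X.1 ∩ σ j).card < X.1.card :=
      Finset.card_lt_card (ssubset_of_subset_of_ne hsub hnee)
    have := X.2.1
    omega
  have h1 := ncard_le_of_subset_image _ _ _ hNsub
  rw [Finset.card_attach] at h1
  exact h1.trans hXcard

abbrev TIdx (n k d : ℕ) (𝒻 : Finset (Finset (Fin n))) : Type :=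
  Unit ⊕ (Fin k) ⊕ (Fin n) ⊕ (EnforcerIdx n d 𝒻 × Fin k)

def tpar (n k d : ℕ) (𝒻 : Finset (Finset (Fin n))) (jm : Fin n → Fin k) :
    TIdx n k d 𝒻 → TIdx n k d 𝒻
  | Sum.inl _ => Sum.inl ()
  | Sum.inr (Sum.inl _) => Sum.inl ()
  | Sum.inr (Sum.inr (Sum.inl i)) => Sum.inr (Sum.inl (jm i))
  | Sum.inr (Sum.inr (Sum.inr (_, j))) => Sum.inr (Sum.inl j)

def tht (n k d : ℕ) (𝒻 : Finset (Finset (Fin n))) : TIdx n k d 𝒻 → ℕ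
  | Sum.inl _ => 0
  | Sum.inr (Sum.inl _) => 1
  | Sum.inr (Sum.inr _) => 2

def tbag (n k d : ℕ) (𝒻 : Finset (Finset (Fin n))) (σ : Fin k → Finset (Fin n))
    (jm : Fin n → Fin k) : TIdx n k d 𝒻 → Set ↥((delSet n k d 𝒻 σ)ᶜ)
  | Sum.inl _ => ∅
  | Sum.inr (Sum.inl j) => Cset n k d 𝒻 σ j
  | Sum.inr (Sum.inr (Sum.inl i)) =>
      {x | x.1 = Sum.inl (i, jm i)} ∪ Dset n k d 𝒻 σ i
  | Sum.inr (Sum.inr (Sum.inr (X, j))) =>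
      {x | x.1 = Sum.inr (Sum.inr (X, j))} ∪ {x | ∃ i ∈ X.1 ∩ σ j, x.1 = Sum.inl (i, j)}

lemma tw_le (σ : Fin k → Finset (Fin n)) (jm : Fin n → Fin k) (hd : 3 ≤ d)
    (hcov : ∀ (i : Fin n) (j : Fin k), i ∈ σ j ↔ j = jm i)
    (hσ𝒻 : ∀ j, σ j ∈ 𝒻) (hσcard : ∀ j, (σ j).card = d) :
    (Gp (n := n) (k := k) (d := d) (𝒻 := 𝒻) σ).treewidth ≤ d - 1 := by
  classical
  have hD : ∃ D : TreeDecomp (Gp (n := n) (k := k) (d := d) (𝒻 := 𝒻) σ),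
      D.width ≤ d - 1 := by
    refine ⟨{ ι := TIdx n k d 𝒻
              tree := parentGraph (tpar n k d 𝒻 jm)
              isTree := parentGraph_isTree _ (tht n k d 𝒻) (Sum.inl ()) rfl ?_
              bag := tbag n k d 𝒻 σ jm
              mem_bag := ?_
              edge_bag := ?_
              conn := ?_ }, ?_⟩
    · -- heights decrease
      rintro (u0 | j1 | i1 | ⟨X1, j1⟩) hu
      · cases u0; exact absurd rfl hu
      · simp [tpar, tht]
      · simp [tpar, tht]
      · simp [tpar, tht]
    · -- mem_bag
      intro v
      rcases hv : v.1 with ⟨i,j0⟩ | ⟨i,a⟩ | ⟨X,j0⟩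
      · exact ⟨Sum.inr (Sum.inl j0), ⟨i, (mem_compl_inl σ).1 (hv ▸ v.2), hv⟩⟩
      · exact ⟨Sum.inr (Sum.inr (Sum.inl i)), Or.inr ⟨a, hv⟩⟩
      · exact ⟨Sum.inr (Sum.inr (Sum.inr (X, j0))), Or.inl hv⟩
    · -- edge_bag
      intro u v huv
      have hadj2 : (CGraph n k d 𝒻).Adj u.1 v.1 := huv
      rcases cadj_cases hadj2 with ⟨i,i',j0,h1,h2⟩ | ⟨i,a,a',h1,h2⟩ |
        ⟨i,a,j0,⟨h1,h2⟩|⟨h1,h2⟩⟩ | ⟨X,j0,i,hi,⟨h1,h2⟩|⟨h1,h2⟩⟩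
      · exact ⟨Sum.inr (Sum.inl j0), ⟨i, (mem_compl_inl σ).1 (h1 ▸ u.2), h1⟩,
          ⟨i', (mem_compl_inl σ).1 (h2 ▸ v.2), h2⟩⟩
      · exact ⟨Sum.inr (Sum.inr (Sum.inl i)), Or.inr ⟨a, h1⟩, Or.inr ⟨a', h2⟩⟩
      · have hsurv : i ∈ σ j0 := (mem_compl_inl σ).1 (h2 ▸ v.2)
        have hj0 : j0 = jm i := (hcov i j0).1 hsurv
        exact ⟨Sum.inr (Sum.inr (Sum.inl i)), Or.inr ⟨a, h1⟩,
          Or.inl (show v.1 = Sum.inl (i, jm i) by rw [h2, hj0])⟩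
      · have hsurv : i ∈ σ j0 := (mem_compl_inl σ).1 (h2 ▸ u.2)
        have hj0 : j0 = jm i := (hcov i j0).1 hsurv
        exact ⟨Sum.inr (Sum.inr (Sum.inl i)), Or.inl (show u.1 = Sum.inl (i, jm i) by rw [h2, hj0]),
          Or.inr ⟨a, h1⟩⟩
      · have hsurv : i ∈ σ j0 := (mem_compl_inl σ).1 (h2 ▸ v.2)
        exact ⟨Sum.inr (Sum.inr (Sum.inr (X, j0))), Or.inl h1,
          Or.inr ⟨i, Finset.mem_inter.2 ⟨hi, hsurv⟩, h2⟩⟩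
      · have hsurv : i ∈ σ j0 := (mem_compl_inl σ).1 (h2 ▸ u.2)
        exact ⟨Sum.inr (Sum.inr (Sum.inr (X, j0))),
          Or.inr ⟨i, Finset.mem_inter.2 ⟨hi, hsurv⟩, h2⟩, Or.inl h1⟩
    · -- conn
      intro v
      rcases hv : v.1 with ⟨i,j0⟩ | ⟨i,a⟩ | ⟨X,j0⟩
      · -- matrix vertex
        have hsurv : i ∈ σ j0 := (mem_compl_inl σ).1 (hv ▸ v.2)
        apply induce_connected_of_star _ _ (Sum.inr (Sum.inl j0))
          (show v ∈ tbag n k d 𝒻 σ jm (Sum.inr (Sum.inl j0)) from ⟨i, hsurv, hv⟩)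
        rintro (t0 | j1 | i1 | ⟨X1, j1⟩) ht
        · exact ht.elim
        · obtain ⟨i1, hi1, he⟩ := ht
          have he2 := hv.symm.trans he
          simp only [Sum.inl.injEq, Prod.mk.injEq] at he2
          left; rw [he2.2]
        · rcases ht with h | ⟨a1, h⟩
          · have he2 := hv.symm.trans h
            simp only [Sum.inl.injEq, Prod.mk.injEq] at he2
            right
            refine ⟨by simp, Or.inr ?_⟩
            show tpar n k d 𝒻 jm (Sum.inr (Sum.inr (Sum.inl i1))) = Sum.inr (Sum.inl j0)
            rw [he2.2]
            simp [tpar, he2.1]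
          · exact absurd (hv.symm.trans h) (by simp)
        · rcases ht with h | ⟨i1, hi1, h⟩
          · exact absurd (hv.symm.trans h) (by simp)
          · have he2 := hv.symm.trans h
            simp only [Sum.inl.injEq, Prod.mk.injEq] at he2
            right
            refine ⟨by simp, Or.inr ?_⟩
            show tpar n k d 𝒻 jm (Sum.inr (Sum.inr (Sum.inr (X1, j1)))) = Sum.inr (Sum.inl j0)
            rw [he2.2]
            simp [tpar]
      · -- dummy vertex
        apply induce_connected_of_star _ _ (Sum.inr (Sum.inr (Sum.inl i)))
          (show v ∈ tbag n k d 𝒻 σ jm (Sum.inr (Sum.inr (Sum.inl i))) from Or.inr ⟨a, hv⟩)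
        rintro (t0 | j1 | i1 | ⟨X1, j1⟩) ht
        · exact ht.elim
        · obtain ⟨i1, hi1, he⟩ := ht
          exact absurd (hv.symm.trans he) (by simp)
        · rcases ht with h | ⟨a1, h⟩
          · exact absurd (hv.symm.trans h) (by simp)
          · have he2 := hv.symm.trans h
            simp only [Sum.inr.injEq, Sum.inl.injEq, Prod.mk.injEq] at he2
            left; rw [he2.1]
        · rcases ht with h | ⟨i1, hi1, h⟩ <;> exact absurd (hv.symm.trans h) (by simp)
      · -- enforcer vertex
        apply induce_connected_of_star _ _ (Sum.inr (Sum.inr (Sum.inr (X, j0))))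
          (show v ∈ tbag n k d 𝒻 σ jm (Sum.inr (Sum.inr (Sum.inr (X, j0)))) from Or.inl hv)
        rintro (t0 | j1 | i1 | ⟨X1, j1⟩) ht
        · exact ht.elim
        · obtain ⟨i1, hi1, he⟩ := ht
          exact absurd (hv.symm.trans he) (by simp)
        · rcases ht with h | ⟨a1, h⟩
          · exact absurd (hv.symm.trans h) (by simp)
          · exact absurd (hv.symm.trans h) (by simp)
        · rcases ht with h | ⟨i1, hi1, h⟩
          · have he2 := hv.symm.trans h
            simp only [Sum.inr.injEq, Prod.mk.injEq] at he2
            left; rw [he2.1, he2.2]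
          · exact absurd (hv.symm.trans h) (by simp)
    · -- width bound
      have hbag : ∀ t : TIdx n k d 𝒻, Nat.card (tbag n k d 𝒻 σ jm t) ≤ d := by
        rintro (t0 | j1 | i1 | ⟨X1, j1⟩)
        · simp [tbag, Nat.card_coe_set_eq]
        · rw [Nat.card_coe_set_eq]
          exact ((Cset_ncard σ j1).trans_eq (hσcard j1)).trans le_rfl
        · rw [Nat.card_coe_set_eq]
          have h1 : ({x | x.1 = Sum.inl (i1, jm i1)} :
              Set ↥((delSet n k d 𝒻 σ)ᶜ)).ncard ≤ 1 := by
            have hsub : ({x | x.1 = Sum.inl (i1, jm i1)} :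
                Set ↥((delSet n k d 𝒻 σ)ᶜ)) ⊆
                {(⟨Sum.inl (i1, jm i1), (mem_compl_inl σ).2 ((hcov i1 (jm i1)).2 rfl)⟩ :
                  ↥((delSet n k d 𝒻 σ)ᶜ))} := by
              intro x hx
              exact Set.mem_singleton_iff.2 (Subtype.ext hx)
            exact (Set.ncard_le_ncard hsub (Set.finite_singleton _)).trans_eq
              (Set.ncard_singleton _)
          have h2 := Dset_ncard (d := d) (𝒻 := 𝒻) σ i1
          have h3 := Set.ncard_union_le ({x | x.1 = Sum.inl (i1, jm i1)} :
            Set ↥((delSet n k d 𝒻 σ)ᶜ)) (Dset n k d 𝒻 σ i1)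
          calc (({x | x.1 = Sum.inl (i1, jm i1)} ∪ Dset n k d 𝒻 σ i1) :
              Set ↥((delSet n k d 𝒻 σ)ᶜ)).ncard ≤ _ := h3
            _ ≤ d := by omega
        · rw [Nat.card_coe_set_eq]
          have h1 : ({x | x.1 = Sum.inr (Sum.inr (X1, j1))} :
              Set ↥((delSet n k d 𝒻 σ)ᶜ)).ncard ≤ 1 := by
            have hsub : ({x | x.1 = Sum.inr (Sum.inr (X1, j1))} :
                Set ↥((delSet n k d 𝒻 σ)ᶜ)) ⊆
                {(⟨Sum.inr (Sum.inr (X1, j1)), mem_compl_inr σ⟩ :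
                  ↥((delSet n k d 𝒻 σ)ᶜ))} := by
              intro x hx
              exact Set.mem_singleton_iff.2 (Subtype.ext hx)
            exact (Set.ncard_le_ncard hsub (Set.finite_singleton _)).trans_eq
              (Set.ncard_singleton _)
          have h2 := Nset_ncard σ hσ𝒻 hσcard X1 j1
          have h3 := Set.ncard_union_le ({x | x.1 = Sum.inr (Sum.inr (X1, j1))} :
            Set ↥((delSet n k d 𝒻 σ)ᶜ))
            ({x | ∃ i ∈ X1.1 ∩ σ j1, x.1 = Sum.inl (i, j1)} :
              Set ↥((delSet n k d 𝒻 σ)ᶜ))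
          calc (({x | x.1 = Sum.inr (Sum.inr (X1, j1))} ∪
              {x | ∃ i ∈ X1.1 ∩ σ j1, x.1 = Sum.inl (i, j1)}) :
              Set ↥((delSet n k d 𝒻 σ)ᶜ)).ncard ≤ _ := h3
            _ ≤ d := by omega
      show (sSup (Set.range fun t => Nat.card (tbag n k d 𝒻 σ jm t)) - 1) ≤ d - 1
      have hsup : sSup (Set.range fun t => Nat.card (tbag n k d 𝒻 σ jm t)) ≤ d := by
        refine csSup_le ⟨Nat.card (tbag n k d 𝒻 σ jm (Sum.inl ())), ⟨Sum.inl (), rfl⟩⟩ ?_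
        rintro x ⟨t, rfl⟩
        exact hbag t
      omega
  obtain ⟨D, hw⟩ := hD
  exact le_trans (Nat.sInf_le ⟨D, rfl⟩) hw

end TW

/-- If there is an exact cover of `[n]` by `k` sets from `𝒻`, then at most `k(n-d)`
vertices can be deleted from the constructed graph `G'` so that the remaining graph is
`K_{d+1}`-minor-free, `P_{4d}`-minor-free, and has treewidth at most `d - 1`. -/
theorem exact_cover_to_modulator (d n k : ℕ) (hd : 3 ≤ d) (hk : 1 ≤ k)
    (hn : n = d * k) (𝒻 : Finset (Finset (Fin n)))
    (hcard : ∀ X ∈ 𝒻, X.card = d)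
    (T : Finset (Finset (Fin n))) (hT : T ⊆ 𝒻) (hTcard : T.card = k)
    (hcover : ∀ i : Fin n, ∃! X : Finset (Fin n), X ∈ T ∧ i ∈ X) :
    ∃ S' : Set (CVert n k d 𝒻), S'.ncard ≤ k * (n - d) ∧
      ¬ ((CGraph n k d 𝒻).induce (S'ᶜ : Set (CVert n k d 𝒻))).HasMinor
        (⊤ : SimpleGraph (Fin (d + 1))) ∧
      ¬ ((CGraph n k d 𝒻).induce (S'ᶜ : Set (CVert n k d 𝒻))).HasMinor
        (SimpleGraph.pathGraph (4 * d)) ∧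
      ((CGraph n k d 𝒻).induce (S'ᶜ : Set (CVert n k d 𝒻))).treewidth ≤ d - 1 := by
  classical
  set e : ↥T ≃ Fin k := T.equivFinOfCardEq hTcard with he
  set σ : Fin k → Finset (Fin n) := fun j => ((e.symm j) : Finset (Fin n)) with hσ
  have hcX : ∀ i : Fin n, (hcover i).exists.choose ∈ T ∧ i ∈ (hcover i).exists.choose :=
    fun i => (hcover i).exists.choose_spec
  set jm : Fin n → Fin k := fun i => e ⟨(hcover i).exists.choose, (hcX i).1⟩ with hjm
  have hσ𝒻 : ∀ j, σ j ∈ 𝒻 := fun j => hT (e.symm j).2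
  have hσcard : ∀ j, (σ j).card = d := fun j => hcard _ (hT (e.symm j).2)
  have hcov : ∀ (i : Fin n) (j : Fin k), i ∈ σ j ↔ j = jm i := by
    intro i j
    constructor
    · intro hij
      have huniq := (hcover i).unique ⟨(e.symm j).2, hij⟩ ⟨(hcX i).1, (hcX i).2⟩
      have h2 : e.symm j = ⟨(hcover i).exists.choose, (hcX i).1⟩ := Subtype.ext huniq
      have h3 : j = e (e.symm j) := (e.apply_symm_apply j).symm
      rw [h3, h2]
    · intro hj
      subst hj
      show i ∈ ((e.symm (e ⟨(hcover i).exists.choose, (hcX i).1⟩)) : Finset (Fin n))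
      rw [Equiv.symm_apply_apply]
      exact (hcX i).2
  refine ⟨delSet n k d 𝒻 σ, ?_, ?_, ?_, ?_⟩
  · -- cardinality bound
    have h1 : (delSet n k d 𝒻 σ).ncard ≤
        ({p : Fin n × Fin k | p.1 ∉ σ p.2}).ncard := by
      apply Set.ncard_image_le (Set.toFinite _)
    have h2 : ({p : Fin n × Fin k | p.1 ∉ σ p.2}).ncard =
        (Finset.univ.filter (fun p : Fin n × Fin k => p.1 ∉ σ p.2)).card := by
      rw [Set.ncard_eq_toFinset_card']
      congr 1
      ext p
      simp
    have h3 : (Finset.univ.filter (fun p : Fin n × Fin k => p.1 ∉ σ p.2)).card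
        ≤ k * (n - d) := by
      rw [Finset.card_eq_sum_card_fiberwise
        (f := fun p : Fin n × Fin k => p.2) (t := Finset.univ) (fun x _ => Finset.mem_univ _)]
      have hfib : ∀ j : Fin k,
          ((Finset.univ.filter (fun p : Fin n × Fin k => p.1 ∉ σ p.2)).filter
            (fun p => p.2 = j)).card ≤ n - d := by
        intro j
        have hsub : (Finset.univ.filter (fun p : Fin n × Fin k => p.1 ∉ σ p.2)).filter
            (fun p => p.2 = j) ⊆ (σ j)ᶜ ×ˢ {j} := by
          intro p hp
          simp only [Finset.mem_filter, Finset.mem_univ, true_and] at hp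
          obtain ⟨hp1, hp2⟩ := hp
          subst hp2
          exact Finset.mem_product.2 ⟨Finset.mem_compl.2 hp1, Finset.mem_singleton_self _⟩
        calc _ ≤ ((σ j)ᶜ ×ˢ ({j} : Finset (Fin k))).card := Finset.card_le_card hsub
          _ = (n - d) * 1 := by
              rw [Finset.card_product, Finset.card_compl, Finset.card_singleton,
                hσcard j, Fintype.card_fin]
          _ = n - d := by ring
      calc ∑ j : Fin k, ((Finset.univ.filter
            (fun p : Fin n × Fin k => p.1 ∉ σ p.2)).filter (fun p => p.2 = j)).card
          ≤ ∑ _j : Fin k, (n - d) := Finset.sum_le_sum (fun j _ => hfib j)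
        _ = k * (n - d) := by
            rw [Finset.sum_const, Finset.card_univ, Fintype.card_fin, smul_eq_mul]
    calc (delSet n k d 𝒻 σ).ncard ≤ _ := h1
      _ = _ := h2
      _ ≤ k * (n - d) := h3
  · exact no_Kd1 σ jm hd hcov hσ𝒻 hσcard
  · exact no_P4d σ jm hd hcov hσ𝒻 hσcard
  · exact tw_le σ jm hd hcov hσ𝒻 hσcard
end

section
/- Fix an integer d ≥ 3 and positive integers n, k with n = dk, and let 𝒻 be a family of d-element subsets of [n]. Let G' be the graph constructed from ([n], 𝒻, k) as follows: the matrix vertices are M = {v_{i,j} : i ∈ [n], j ∈ [k]}, and for each j ∈ [k] the set {v_{i,j} : i ∈ [n]} induces a clique; for each i ∈ [n] there is a dummy clique D_i of d − 1 vertices, each adjacent to all of {v_{i,j} : j ∈ [k]}; and for each d-element subset X of [n] with X ∉ 𝒻 and each j ∈ [k] there is an enforcer vertex f_{j,X} whose neighborhood is exactly {v_{i,j} : i ∈ X}. Suppose X_1, …, X_k ∈ 𝒻 partition [n], and let S' = {v_{i,j} : j ∈ [k], i ∉ X_j}. Then no connected component of G' − S' contains a simple path on 4d vertices. -/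
namespace NLP

variable {n k d : ℕ} {𝒻 : Finset (Finset (Fin n))}

def isCol : CVert n k d 𝒻 → Bool
  | Sum.inl _ => true
  | _ => false

def isDum : CVert n k d 𝒻 → Bool
  | Sum.inr (Sum.inl _) => true
  | _ => false

def isEnf : CVert n k d 𝒻 → Bool
  | Sum.inr (Sum.inr _) => true
  | _ => false

lemma count_partition (l : List (CVert n k d 𝒻)) :
    l.countP isCol + l.countP isDum + l.countP isEnf = l.length := by
  induction l with
  | nil => simp
  | cons a t ih =>
    rcases a with ⟨i, j⟩ | (⟨i, c⟩ | ⟨Y, j⟩) <;>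
      simp [List.countP_cons, isCol, isDum, isEnf] <;> omega

lemma enf_adj {Y : EnforcerIdx n d 𝒻} {j : Fin k} {w : CVert n k d 𝒻}
    (h : (CGraph n k d 𝒻).Adj (Sum.inr (Sum.inr (Y, j))) w) :
    ∃ i, w = Sum.inl (i, j) ∧ i ∈ Y.1 := by
  rcases h.2 with hr | hr <;>
    rcases w with ⟨i, j'⟩ | (⟨i, c⟩ | ⟨Y', j'⟩) <;> simp [CRel] at hr <;>
    exact ⟨i, by simp [hr.1], hr.2⟩

lemma dum_adj {i : Fin n} {c : Fin (d-1)} {w : CVert n k d 𝒻}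
    (h : (CGraph n k d 𝒻).Adj (Sum.inr (Sum.inl (i, c))) w) :
    (∃ c', w = Sum.inr (Sum.inl (i, c'))) ∨ (∃ j, w = Sum.inl (i, j)) := by
  rcases h.2 with hr | hr <;>
    rcases w with ⟨i', j'⟩ | (⟨i', c'⟩ | ⟨Y', j'⟩) <;> simp [CRel] at hr
  · exact Or.inr ⟨j', by simp [hr]⟩
  · exact Or.inl ⟨c', by simp [hr]⟩
  · exact Or.inl ⟨c', by simp [hr]⟩

lemma adj_enf_left {a b : CVert n k d 𝒻} (h : (CGraph n k d 𝒻).Adj a b)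
    (ha : isEnf a = true) : isCol b = true := by
  rcases a with ⟨i, j⟩ | (⟨i, c⟩ | ⟨Y, j⟩) <;> simp [isEnf] at ha
  obtain ⟨i, rfl, -⟩ := enf_adj h
  rfl

lemma adj_dum_left {a b : CVert n k d 𝒻} (h : (CGraph n k d 𝒻).Adj a b)
    (ha : isDum a = true) : isEnf b = false := by
  rcases b with ⟨i, j⟩ | (⟨i, c⟩ | ⟨Y, j⟩) <;> simp [isEnf]
  have hcola := adj_enf_left h.symm rfl
  rcases a with ⟨i', j'⟩ | (⟨i', c'⟩ | ⟨Y', j'⟩) <;> simp [isDum, isCol] at ha hcola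

lemma enf_le (l : List (CVert n k d 𝒻)) (hc : List.Chain' (CGraph n k d 𝒻).Adj l) :
    l.countP isEnf ≤ l.countP isCol + (if (l.head?.elim false fun a => isEnf a) then 1 else 0) := by
  induction l with
  | nil => simp
  | cons a t ih =>
    have ih' := ih hc.tail
    rcases t with _ | ⟨b, t'⟩
    · rcases a with ⟨i, j⟩ | (⟨i, c⟩ | ⟨Y, j⟩) <;> simp [isEnf, isCol]
    · have hab : (CGraph n k d 𝒻).Adj a b := (List.isChain_cons_cons.1 hc).1
      rcases a with ⟨i, j⟩ | (⟨i, c⟩ | ⟨Y, j⟩)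
      · rcases b with ⟨i', j'⟩ | (⟨i', c'⟩ | ⟨Y', j'⟩) <;>
          simp [List.countP_cons, isEnf, isCol] at ih' ⊢ <;> omega
      · have hb := adj_dum_left hab rfl
        rcases b with ⟨i', j'⟩ | (⟨i', c'⟩ | ⟨Y', j'⟩)
        · simp [List.countP_cons, isEnf, isCol] at ih' ⊢; omega
        · simp [List.countP_cons, isEnf, isCol] at ih' ⊢; omega
        · simp [isEnf] at hb
      · have hb := adj_enf_left hab rfl
        rcases b with ⟨i', j'⟩ | (⟨i', c'⟩ | ⟨Y', j'⟩)
        · simp [List.countP_cons, isEnf, isCol] at ih' ⊢; omega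
        · simp [isCol] at hb
        · simp [isCol] at hb

end NLP
namespace NLP2
open NLP

variable {n k d : ℕ} {𝒻 : Finset (Finset (Fin n))} {Xf : Fin k → Finset (Fin n)}

lemma countP_cons_of_neg' {α : Type*} {p : α → Bool} {a : α} (l : List α)
    (h : p a = false) : (a :: l).countP p = l.countP p := by
  simp [List.countP_cons, h]

noncomputable def colF (hpart : ∀ i : Fin n, ∃! j : Fin k, i ∈ Xf j) :
    CVert n k d 𝒻 → Fin k
  | Sum.inl (_, j) => j
  | Sum.inr (Sum.inl (i, _)) => Fintype.choose _ (hpart i)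
  | Sum.inr (Sum.inr (_, j)) => j

lemma choose_eq (hpart : ∀ i : Fin n, ∃! j : Fin k, i ∈ Xf j) {i : Fin n} {j : Fin k}
    (hij : i ∈ Xf j) : Fintype.choose _ (hpart i) = j :=
  (hpart i).unique (Fintype.choose_spec _ (hpart i)) hij

lemma col_const {Sc : Set (CVert n k d 𝒻)} (hpart : ∀ i : Fin n, ∃! j : Fin k, i ∈ Xf j)
    (hmem : ∀ (i : Fin n) (j : Fin k), (Sum.inl (i, j) : CVert n k d 𝒻) ∈ Sc → i ∈ Xf j)
    {a b : CVert n k d 𝒻} (h : (CGraph n k d 𝒻).Adj a b) (hA : a ∈ Sc) (hB : b ∈ Sc) :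
    colF hpart a = colF hpart b := by
  rcases a with ⟨i, j⟩ | (⟨i, c⟩ | ⟨Y, j⟩)
  · rcases b with ⟨i', j'⟩ | (⟨i', c'⟩ | ⟨Y', j'⟩)
    · rcases h.2 with hr | hr <;> simp [CRel] at hr <;> simp [colF, hr]
    · obtain (⟨c'', heq⟩ | ⟨j'', heq⟩) := dum_adj h.symm
      · exact absurd heq (by simp)
      · simp only [Sum.inl.injEq, Prod.mk.injEq] at heq
        obtain ⟨rfl, rfl⟩ := heq
        simp only [colF]
        exact (choose_eq hpart (hmem _ _ hA)).symm
    · obtain ⟨i'', heq, -⟩ := enf_adj h.symm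
      simp only [Sum.inl.injEq, Prod.mk.injEq] at heq
      obtain ⟨rfl, rfl⟩ := heq
      rfl
  · obtain (⟨c', rfl⟩ | ⟨j', rfl⟩) := dum_adj h
    · rfl
    · simp only [colF]
      exact choose_eq hpart (hmem _ _ hB)
  · obtain ⟨i', rfl, -⟩ := enf_adj h
    rfl

lemma col_chain {Sc : Set (CVert n k d 𝒻)} (hpart : ∀ i : Fin n, ∃! j : Fin k, i ∈ Xf j)
    (hmem : ∀ (i : Fin n) (j : Fin k), (Sum.inl (i, j) : CVert n k d 𝒻) ∈ Sc → i ∈ Xf j) :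
    ∀ {a : CVert n k d 𝒻} {l}, List.Chain' (CGraph n k d 𝒻).Adj (a :: l) →
      (∀ v ∈ a :: l, v ∈ Sc) → ∀ v ∈ a :: l, colF hpart v = colF hpart a := by
  intro a l
  induction l generalizing a with
  | nil =>
    intro _ _ v hv
    simp only [List.mem_singleton] at hv
    rw [hv]
  | cons b t ih =>
    intro hc hsub v hv
    have hab := (List.isChain_cons_cons.1 hc).1
    have hba := col_const hpart hmem hab (hsub a (by simp)) (hsub b (by simp))
    rcases List.mem_cons.1 hv with rfl | hv'
    · rfl
    · rw [ih (List.isChain_cons_cons.1 hc).2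
        (fun w hw => hsub w (List.mem_cons_of_mem _ hw)) v hv', ← hba]

lemma col_count (i0 : Fin n) {Sc : Set (CVert n k d 𝒻)}
    (hpart : ∀ i : Fin n, ∃! j : Fin k, i ∈ Xf j)
    (hmem : ∀ (i : Fin n) (j : Fin k), (Sum.inl (i, j) : CVert n k d 𝒻) ∈ Sc → i ∈ Xf j)
    (hcardX : ∀ j, (Xf j).card = d)
    {l : List (CVert n k d 𝒻)} (hc : List.Chain' (CGraph n k d 𝒻).Adj l) (hnd : l.Nodup)
    (hsub : ∀ v ∈ l, v ∈ Sc) : l.countP isCol ≤ d := by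
  classical
  rcases l with _ | ⟨a, t⟩
  · simp
  set j0 := colF hpart a with hj0
  have hcolv : ∀ v ∈ a :: t, isCol v = true → ∃ i, v = Sum.inl (i, j0) ∧ i ∈ Xf j0 := by
    intro v hv hcv
    rcases v with ⟨i, j⟩ | (⟨i, c⟩ | ⟨Y, j⟩) <;> simp [isCol] at hcv
    have hcc : colF hpart (Sum.inl (i, j) : CVert n k d 𝒻) = j0 :=
      col_chain hpart hmem hc hsub _ hv
    simp only [colF] at hcc
    exact ⟨i, by rw [hcc], hcc ▸ hmem i j (hsub _ hv)⟩
  rw [List.countP_eq_length_filter]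
  set m := (a :: t).filter (fun v => isCol v) with hm
  have hmnd : m.Nodup := hnd.filter _
  have hmmem : ∀ v ∈ m, ∃ i, v = Sum.inl (i, j0) ∧ i ∈ Xf j0 := fun v hv =>
    hcolv v (List.mem_of_mem_filter hv) (by simpa using List.of_mem_filter hv)
  set f : CVert n k d 𝒻 → Fin n := fun v => match v with | Sum.inl (i, _) => i | _ => i0
    with hf
  have hmapnd : (m.map f).Nodup := by
    refine hmnd.map_on ?_
    intro x hx y hy hxy
    obtain ⟨ix, rfl, -⟩ := hmmem x hx
    obtain ⟨iy, rfl, -⟩ := hmmem y hy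
    simp only [hf] at hxy
    rw [hxy]
  have hsubX : (m.map f).toFinset ⊆ Xf j0 := by
    intro i hi
    obtain ⟨v, hv, rfl⟩ := List.mem_map.1 (List.mem_toFinset.1 hi)
    obtain ⟨iv, rfl, hivX⟩ := hmmem v hv
    simpa [hf] using hivX
  have : (m.map f).toFinset.card = m.length := by
    rw [List.toFinset_card_of_nodup hmapnd, List.length_map]
  calc m.length = (m.map f).toFinset.card := this.symm
    _ ≤ (Xf j0).card := Finset.card_le_card hsubX
    _ = d := hcardX j0

lemma dumrun_le (hd : 3 ≤ d) {i : Fin n} {m : List (CVert n k d 𝒻)} (hm : m.Nodup)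
    (hall : ∀ v ∈ m, ∃ c, v = Sum.inr (Sum.inl (i, c))) : m.length ≤ d - 1 := by
  have hc0 : Fin (d - 1) := ⟨0, by omega⟩
  set f : CVert n k d 𝒻 → Fin (d - 1) :=
    fun v => match v with | Sum.inr (Sum.inl (_, c)) => c | _ => hc0 with hf
  have hmapnd : (m.map f).Nodup := by
    refine hm.map_on ?_
    intro x hx y hy hxy
    obtain ⟨cx, rfl⟩ := hall x hx
    obtain ⟨cy, rfl⟩ := hall y hy
    simp only [hf] at hxy
    rw [hxy]
  have := hmapnd.length_le_card
  simpa using this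

lemma dum_propagate {i : Fin n} :
    ∀ (l : List (CVert n k d 𝒻)) (c : Fin (d - 1)),
      List.Chain' (CGraph n k d 𝒻).Adj (Sum.inr (Sum.inl (i, c)) :: l) →
      (∀ j, (Sum.inl (i, j) : CVert n k d 𝒻) ∉ l) →
      ∀ v ∈ l, ∃ c', v = Sum.inr (Sum.inl (i, c')) := by
  intro l
  induction l with
  | nil => simp
  | cons b t ih =>
    intro c hc hnotin v hv
    have hab := (List.isChain_cons_cons.1 hc).1
    obtain (⟨c', rfl⟩ | ⟨j, rfl⟩) := dum_adj hab
    · rcases List.mem_cons.1 hv with rfl | hv'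
      · exact ⟨c', rfl⟩
      · exact ih c' (List.isChain_cons_cons.1 hc).2
          (fun j hj => hnotin j (List.mem_cons_of_mem _ hj)) v hv'
    · exact (hnotin j List.mem_cons_self).elim

lemma dum_count_head (hd : 3 ≤ d) {Sc : Set (CVert n k d 𝒻)}
    (hpart : ∀ i : Fin n, ∃! j : Fin k, i ∈ Xf j)
    (hmem : ∀ (i : Fin n) (j : Fin k), (Sum.inl (i, j) : CVert n k d 𝒻) ∈ Sc → i ∈ Xf j) :
    ∀ (l : List (CVert n k d 𝒻)), List.Chain' (CGraph n k d 𝒻).Adj l → l.Nodup →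
      (∀ v ∈ l, v ∈ Sc) → (∀ a ∈ l.head?, isDum a = false) →
      l.countP isDum ≤ d - 1 := by
  intro l
  induction l with
  | nil => simp
  | cons a t ih =>
    intro hc hnd hsub hhead
    have ha : isDum a = false := hhead a rfl
    rcases t with _ | ⟨b, t'⟩
    · simp [List.countP_cons, ha]
    · by_cases hb : isDum b = true
      · rcases b with ⟨i', j'⟩ | (⟨i, c⟩ | ⟨Y', j'⟩) <;> simp [isDum] at hb
        have hab := (List.isChain_cons_cons.1 hc).1
        obtain (⟨c', ha'⟩ | ⟨ja, ha'⟩) := dum_adj hab.symm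
        · rw [ha'] at ha; simp [isDum] at ha
        subst ha'
        have hanotint : (Sum.inl (i, ja) : CVert n k d 𝒻) ∉
            (Sum.inr (Sum.inl (i, c)) :: t') := (List.nodup_cons.1 hnd).1
        have hnotin : ∀ j, (Sum.inl (i, j) : CVert n k d 𝒻) ∉
            (Sum.inr (Sum.inl (i, c)) :: t') := by
          intro j hj
          have hjX : i ∈ Xf j := hmem i j (hsub _ (List.mem_cons_of_mem _ hj))
          have hjaX : i ∈ Xf ja := hmem i ja (hsub _ List.mem_cons_self)
          have hje : j = ja := (hpart i).unique hjX hjaX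
          subst hje
          exact hanotint hj
        have halldum : ∀ v ∈ (Sum.inr (Sum.inl (i, c)) :: t'), ∃ c',
            v = (Sum.inr (Sum.inl (i, c')) : CVert n k d 𝒻) := by
          intro v hv
          rcases List.mem_cons.1 hv with rfl | hv'
          · exact ⟨c, rfl⟩
          · exact dum_propagate t' c hc.tail
              (fun j hj => hnotin j (List.mem_cons_of_mem _ hj)) v hv'
        have hcall : (Sum.inr (Sum.inl (i, c)) :: t').countP isDum ≤
            (Sum.inr (Sum.inl (i, c)) :: t').length := List.countP_le_length
        have hlen : (Sum.inr (Sum.inl (i, c)) :: t').length ≤ d - 1 :=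
          dumrun_le hd (List.nodup_cons.1 hnd).2 halldum
        rw [countP_cons_of_neg' _ ha]
        exact le_trans hcall hlen
      · have hrec := ih hc.tail (List.nodup_cons.1 hnd).2
          (fun w hw => hsub w (List.mem_cons_of_mem _ hw))
          (by intro x hx; simp at hx; subst hx; simpa using hb)
        rw [countP_cons_of_neg' _ ha]
        exact hrec

lemma dum_count (hd : 3 ≤ d) {Sc : Set (CVert n k d 𝒻)}
    (hpart : ∀ i : Fin n, ∃! j : Fin k, i ∈ Xf j)
    (hmem : ∀ (i : Fin n) (j : Fin k), (Sum.inl (i, j) : CVert n k d 𝒻) ∈ Sc → i ∈ Xf j)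
    {l : List (CVert n k d 𝒻)} (hc : List.Chain' (CGraph n k d 𝒻).Adj l) (hnd : l.Nodup)
    (hsub : ∀ v ∈ l, v ∈ Sc) : l.countP isDum ≤ 2 * (d - 1) := by
  classical
  rcases l with _ | ⟨a, t⟩
  · simp
  by_cases ha : isDum a = true
  · rcases a with ⟨i', j'⟩ | (⟨i, c⟩ | ⟨Y', j'⟩) <;> simp [isDum] at ha
    rcases Classical.em (∃ j, (Sum.inl (i, j) : CVert n k d 𝒻) ∈ t) with hex | hex
    · obtain ⟨j0, hj0⟩ := hex
      obtain ⟨l1, l2, rfl⟩ := List.append_of_mem hj0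
      have hass : (Sum.inr (Sum.inl (i, c)) :: (l1 ++ Sum.inl (i, j0) :: l2) :
          List (CVert n k d 𝒻)) =
          (Sum.inr (Sum.inl (i, c)) :: l1) ++ (Sum.inl (i, j0) :: l2) := by simp
      rw [hass] at hc hnd hsub ⊢
      rw [List.countP_append]
      have hc1 : List.Chain' (CGraph n k d 𝒻).Adj (Sum.inr (Sum.inl (i, c)) :: l1) :=
        (List.isChain_append.1 hc).1
      have hc2 : List.Chain' (CGraph n k d 𝒻).Adj (Sum.inl (i, j0) :: l2) :=
        (List.isChain_append.1 hc).2.1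
      have hnd1 : (Sum.inr (Sum.inl (i, c)) :: l1).Nodup := (List.nodup_append.1 hnd).1
      have hnd2 : (Sum.inl (i, j0) :: l2).Nodup := (List.nodup_append.1 hnd).2.1
      have hdisj := List.disjoint_of_nodup_append hnd
      have hj0X : i ∈ Xf j0 :=
        hmem i j0 (hsub _ (List.mem_append_right _ List.mem_cons_self))
      have hnotin : ∀ j, (Sum.inl (i, j) : CVert n k d 𝒻) ∉ l1 := by
        intro j hj
        have hjX : i ∈ Xf j :=
          hmem i j (hsub _ (List.mem_append_left _ (List.mem_cons_of_mem _ hj)))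
        have : j = j0 := (hpart i).unique hjX hj0X
        subst this
        exact hdisj (List.mem_cons_of_mem _ hj) List.mem_cons_self
      have halldum : ∀ v ∈ (Sum.inr (Sum.inl (i, c)) :: l1), ∃ c',
          v = (Sum.inr (Sum.inl (i, c')) : CVert n k d 𝒻) := by
        intro v hv
        rcases List.mem_cons.1 hv with rfl | hv'
        · exact ⟨c, rfl⟩
        · exact dum_propagate l1 c hc1 hnotin v hv'
      have h1 : (Sum.inr (Sum.inl (i, c)) :: l1).countP isDum ≤ d - 1 :=
        le_trans List.countP_le_length (dumrun_le hd hnd1 halldum)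
      have h2 : (Sum.inl (i, j0) :: l2).countP isDum ≤ d - 1 :=
        dum_count_head hd hpart hmem _ hc2 hnd2
          (fun w hw => hsub w (List.mem_append_right _ hw))
          (by intro x hx; simp at hx; subst hx; rfl)
      omega
    · push_neg at hex
      have halldum : ∀ v ∈ (Sum.inr (Sum.inl (i, c)) :: t), ∃ c',
          v = (Sum.inr (Sum.inl (i, c')) : CVert n k d 𝒻) := by
        intro v hv
        rcases List.mem_cons.1 hv with rfl | hv'
        · exact ⟨c, rfl⟩
        · exact dum_propagate t c hc hex v hv'
      have := le_trans (List.countP_le_length (p := isDum)) (dumrun_le hd hnd halldum)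
      omega
  · have := dum_count_head hd hpart hmem _ hc hnd hsub
      (by intro x hx; simp at hx; subst hx; simpa using ha)
    omega

end NLP2

/-- If `X 0, …, X (k-1) ∈ 𝒻` partition `[n]` and
`S' = {v_{i,j} : j ∈ [k], i ∉ X j}`, then no connected component of `G' - S'` contains
a simple path on `4d` vertices (i.e. `G' - S'` has no simple path on `4d` vertices). -/
theorem no_long_path_after_deletion (d n k : ℕ) (hd : 3 ≤ d) (hk : 1 ≤ k)
    (hn : n = d * k) (𝒻 : Finset (Finset (Fin n)))
    (hcard : ∀ X ∈ 𝒻, X.card = d)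
    (X : Fin k → Finset (Fin n)) (hX : ∀ j : Fin k, X j ∈ 𝒻)
    (hpart : ∀ i : Fin n, ∃! j : Fin k, i ∈ X j)
    (S' : Set (CVert n k d 𝒻))
    (hS' : S' = {w : CVert n k d 𝒻 | ∃ i : Fin n, ∃ j : Fin k,
      w = Sum.inl (i, j) ∧ i ∉ X j}) :
    ¬ ∃ (u v : ↥(S'ᶜ : Set (CVert n k d 𝒻)))
        (p : ((CGraph n k d 𝒻).induce (S'ᶜ : Set (CVert n k d 𝒻))).Walk u v),
        p.IsPath ∧ p.length + 1 = 4 * d := by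
  rintro ⟨u, v, p, hp, hlen⟩
  classical
  let l : List (CVert n k d 𝒻) := p.support.map Subtype.val
  have hchain : List.Chain' (CGraph n k d 𝒻).Adj l := by
    show List.Chain' (CGraph n k d 𝒻).Adj (p.support.map Subtype.val)
    exact (List.isChain_map _).2 p.isChain_adj_support
  have hnodup : l.Nodup := hp.support_nodup.map Subtype.val_injective
  have hsub : ∀ w ∈ l, w ∈ (S'ᶜ : Set (CVert n k d 𝒻)) := by
    intro w hw
    obtain ⟨a, -, rfl⟩ := List.mem_map.1 hw
    exact a.2
  have hlength : l.length = 4 * d := by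
    show (p.support.map Subtype.val).length = 4 * d
    rw [List.length_map, SimpleGraph.Walk.length_support]
    omega
  have hmem : ∀ (i : Fin n) (j : Fin k),
      (Sum.inl (i, j) : CVert n k d 𝒻) ∈ (S'ᶜ : Set (CVert n k d 𝒻)) → i ∈ X j := by
    intro i j hij
    by_contra hni
    exact hij (by rw [hS']; exact ⟨i, j, rfl, hni⟩)
  have hn0 : 0 < n := by subst hn; exact Nat.mul_pos (by omega) (by omega)
  have h1 := NLP2.col_count ⟨0, hn0⟩ hpart hmem (fun j => hcard _ (hX j)) hchain hnodup hsub
  have h2 := NLP.enf_le l hchain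
  have h3 := NLP2.dum_count hd hpart hmem hchain hnodup hsub
  have h4 := NLP.count_partition l
  have h5 : (if (l.head?.elim false fun a => NLP.isEnf a) then 1 else 0) ≤ 1 := by
    split <;> omega
  omega
end
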